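/- arXiv:1204.2609 — 4 statements merged into one kernel-verified Lean document; each statement's English description precedes it below -/
import Mathlib

section
/- (Theorem 1, supervised PAC-Bayes bound for stochastic classifiers with random variables). Let D be a probability measure on X × Y, let P be a (prior) probability measure on Θ, let δ ∈ (0,1], C > 0 and m ≥ 1. Then with probability at least 1 − δ over the draw of an i.i.d. sample S = ((x_1,y_1),…,(x_m,y_m)) ∼ D^{⊗m}, for every (posterior) probability measure Q on Θ that is absolutely continuous with respect to P and has finite KL(Q‖P), the true risk of the Gibbs classifier satisfies R(G_Q) ≤ (1/(1 − e^{−C})) · [1 − exp( −C·R_S(G_Q) − (1/m)·(KL(Q‖P) − ln δ) )]. -/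
open MeasureTheory

abbrev Label : Type := ({-1, 1} : Set ℤ)

noncomputable def klDiv {Ω : Type*} [MeasurableSpace Ω] (Q P : Measure Ω) : ℝ :=
  ∫ ω, Real.log (Q.rnDeriv P ω).toReal ∂Q

lemma aux_bdd {α : Type*} [MeasurableSpace α] {μ : Measure α} [IsFiniteMeasure μ]
    {f : α → ℝ} (hf : AEStronglyMeasurable f μ) (M : ℝ) (h : ∀ x, |f x| ≤ M) :
    Integrable f μ :=
  (integrable_const M).mono' hf (Filter.Eventually.of_forall (by simpa [Real.norm_eq_abs] using h))

lemma aux_young {x : ℝ} (y : ℝ) (hx : 0 ≤ x) :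
    x * y ≤ x * Real.log x - x + Real.exp y := by
  rcases eq_or_lt_of_le hx with h | h
  · simp [← h]
    positivity
  · have h1 := Real.add_one_le_exp (y - Real.log x)
    have h2 : Real.exp (y - Real.log x) * x = Real.exp y := by
      rw [Real.exp_sub, Real.exp_log h]
      field_simp
    nlinarith [mul_le_mul_of_nonneg_right h1 (le_of_lt h)]

lemma aux_tangent {a r r₀ : ℝ} (ha0 : 0 < a) (ha1 : a < 1)
    (hr1 : r ≤ 1) (hs1 : r₀ ≤ 1) :
    -Real.log (1 - a * r₀) + (a / (1 - a * r₀)) * (r - r₀) ≤ -Real.log (1 - a * r) := by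
  have hu : 0 < 1 - a * r := by nlinarith
  have hv : 0 < 1 - a * r₀ := by nlinarith
  have key : Real.log (1 - a * r) - Real.log (1 - a * r₀) ≤ (1 - a * r) / (1 - a * r₀) - 1 := by
    have := Real.log_le_sub_one_of_pos (div_pos hu hv)
    rwa [Real.log_div (ne_of_gt hu) (ne_of_gt hv)] at this
  have h2 : (1 - a * r) / (1 - a * r₀) - 1 = (a * r₀ - a * r) / (1 - a * r₀) := by
    field_simp
    ring
  have h3 : (a / (1 - a * r₀)) * (r - r₀) = -((a * r₀ - a * r) / (1 - a * r₀)) := by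
    field_simp
    ring
  rw [h3]
  linarith [key, h2.le, h2.ge]

set_option maxHeartbeats 2000000 in
/-- **Theorem 1 (supervised PAC-Bayes bound for stochastic classifiers).**
With probability at least `1 - δ` over the draw of an i.i.d. sample
`S ∼ D^{⊗m}`, every posterior `Q ≪ P` with finite `KL(Q‖P)` satisfies
`R(G_Q) ≤ (1/(1 - e^{-C})) (1 - exp(-C R_S(G_Q) - (1/m)(KL(Q‖P) - ln δ)))`. -/
theorem pac_bayes_supervised
    {X Θ : Type*} [MeasurableSpace X] [MeasurableSpace Θ]
    (F : Θ → X → Label) (hF : Measurable fun p : Θ × X => F p.1 p.2)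
    (D : Measure (X × Label)) [IsProbabilityMeasure D]
    (P : Measure Θ) [IsProbabilityMeasure P]
    (δ : ℝ) (hδ0 : 0 < δ) (hδ1 : δ ≤ 1)
    (C : ℝ) (hC : 0 < C)
    (m : ℕ) (hm : 1 ≤ m) :
    ENNReal.ofReal (1 - δ) ≤
      (Measure.pi fun _ : Fin m => D)
        {S : Fin m → X × Label |
          ∀ Q : Measure Θ, IsProbabilityMeasure Q → Q ≪ P →
            Integrable (fun θ => Real.log (Q.rnDeriv P θ).toReal) Q →
            (∫ θ, ∫ p, (if F θ p.1 ≠ p.2 then (1 : ℝ) else 0) ∂D ∂Q) ≤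
              (1 / (1 - Real.exp (-C))) *
                (1 - Real.exp
                  (-C * (∫ θ, (m : ℝ)⁻¹ *
                      ∑ i : Fin m, (if F θ (S i).1 ≠ (S i).2 then (1 : ℝ) else 0) ∂Q)
                   - (1 / (m : ℝ)) * (klDiv Q P - Real.log δ)))} := by
  classical
  have hm0 : (0:ℝ) < m := by exact_mod_cast hm
  set a : ℝ := 1 - Real.exp (-C) with ha_def
  have hexpC : Real.exp (-C) < 1 := by
    rw [Real.exp_lt_one_iff]; linarith
  have hexpC0 : 0 < Real.exp (-C) := Real.exp_pos _
  have ha0 : 0 < a := by simp only [ha_def]; linarith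
  have ha1 : a < 1 := by simp only [ha_def]; linarith
  set μm := (Measure.pi fun _ : Fin m => D) with hμm_def
  -- the loss
  set ℓ : Θ → X × Label → ℝ := fun θ p => if F θ p.1 ≠ p.2 then (1:ℝ) else 0 with hℓ_def
  have hℓm : Measurable (fun q : Θ × (X × Label) => ℓ q.1 q.2) := by
    apply Measurable.ite _ measurable_const measurable_const
    have hmap : Measurable (fun q : Θ × (X × Label) => (F q.1 q.2.1, q.2.2)) := by
      exact (hF.comp (measurable_fst.prodMk (measurable_snd.fst))).prodMk measurable_snd.snd
    exact hmap ((Set.to_countable {v : Label × Label | v.1 ≠ v.2}).measurableSet)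
  have hℓ0 : ∀ θ p, 0 ≤ ℓ θ p := by
    intro θ p; simp only [hℓ_def]; split <;> norm_num
  have hℓ1 : ∀ θ p, ℓ θ p ≤ 1 := by
    intro θ p; simp only [hℓ_def]; split <;> norm_num
  have hℓb : ∀ θ p, |ℓ θ p| ≤ 1 := fun θ p => abs_le.2 ⟨by linarith [hℓ0 θ p], hℓ1 θ p⟩
  -- the true risk
  set r : Θ → ℝ := fun θ => ∫ p, ℓ θ p ∂D with hr_def
  have hrm : Measurable r :=
    hℓm.stronglyMeasurable.integral_prod_right'.measurable
  have hℓmθ : ∀ θ, Measurable (ℓ θ) := fun θ => hℓm.comp (measurable_prodMk_left)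
  have hℓint : ∀ θ, Integrable (ℓ θ) D := fun θ =>
    aux_bdd (hℓmθ θ).aestronglyMeasurable 1 (hℓb θ)
  have hr0 : ∀ θ, 0 ≤ r θ := fun θ => integral_nonneg (hℓ0 θ)
  have hr1 : ∀ θ, r θ ≤ 1 := by
    intro θ
    calc r θ ≤ ∫ _, (1:ℝ) ∂D := integral_mono (hℓint θ) (integrable_const 1) (hℓ1 θ)
    _ = 1 := by simp
  -- continuing
  have h1ar : ∀ t : ℝ, 0 ≤ t → t ≤ 1 → Real.exp (-C) ≤ 1 - a * t := by
    intro t ht0 ht1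
    have : a * t ≤ a := by nlinarith
    simp only [ha_def] at this ⊢
    linarith
  have h1ar' : ∀ t : ℝ, 0 ≤ t → t ≤ 1 → 0 < 1 - a * t := fun t h0 h1 =>
    lt_of_lt_of_le hexpC0 (h1ar t h0 h1)
  set Φ : ℝ → ℝ := fun t => -Real.log (1 - a * t) with hΦ_def
  have hΦm : Measurable Φ :=
    (Real.measurable_log.comp (measurable_const.sub (measurable_id.const_mul a))).neg
  have hΦ0 : ∀ t : ℝ, 0 ≤ t → t ≤ 1 → 0 ≤ Φ t := by
    intro t h0 h1
    simp only [hΦ_def, Left.nonneg_neg_iff]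
    apply Real.log_nonpos
    · linarith [h1ar' t h0 h1]
    · nlinarith
  have hΦC : ∀ t : ℝ, 0 ≤ t → t ≤ 1 → Φ t ≤ C := by
    intro t h0 h1
    have := Real.log_le_log (Real.exp_pos (-C)) (h1ar t h0 h1)
    rw [Real.log_exp] at this
    simp only [hΦ_def]
    linarith
  set L : Θ → (Fin m → X × Label) → ℝ := fun θ S => ∑ i, ℓ θ (S i) with hL_def
  have hLb : ∀ θ S, |L θ S| ≤ m := by
    intro θ S
    calc |L θ S| ≤ ∑ i : Fin m, |ℓ θ (S i)| := Finset.abs_sum_le_sum_abs _ _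
    _ ≤ ∑ _i : Fin m, (1:ℝ) := Finset.sum_le_sum fun i _ => hℓb θ (S i)
    _ = m := by simp
  set g : (Fin m → X × Label) → Θ → ℝ := fun S θ => m * Φ (r θ) - C * L θ S with hg_def
  have hgm : Measurable (fun q : (Fin m → X × Label) × Θ => g q.1 q.2) := by
    apply Measurable.sub
    · exact (measurable_const.mul ((hΦm.comp hrm).comp measurable_snd))
    · apply measurable_const.mul
      apply Finset.measurable_sum
      intro i _
      exact hℓm.comp (measurable_snd.prodMk ((measurable_pi_apply i).comp measurable_fst))
  set M : ℝ := C * m + C * m with hM_def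
  have hgb : ∀ S θ, |g S θ| ≤ M := by
    intro S θ
    have h1 : |(m:ℝ) * Φ (r θ)| ≤ C * m := by
      rw [abs_mul, abs_of_nonneg (by positivity : (0:ℝ) ≤ (m:ℝ)),
        abs_of_nonneg (hΦ0 _ (hr0 θ) (hr1 θ))]
      calc (m:ℝ) * Φ (r θ) ≤ m * C := by nlinarith [hΦC _ (hr0 θ) (hr1 θ)]
      _ = C * m := by ring
    have h2 : |C * L θ S| ≤ C * m := by
      rw [abs_mul, abs_of_pos hC]
      nlinarith [hLb θ S]
    calc |g S θ| ≤ |(m:ℝ) * Φ (r θ)| + |C * L θ S| := abs_sub _ _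
    _ ≤ M := by simp only [hM_def]; linarith
  set Z : (Fin m → X × Label) → ℝ := fun S => ∫ θ, Real.exp (g S θ) ∂P with hZdef
  have hegm : Measurable (fun q : (Fin m → X × Label) × Θ => Real.exp (g q.1 q.2)) :=
    Real.measurable_exp.comp hgm
  have hZm : Measurable Z :=
    hegm.stronglyMeasurable.integral_prod_right'.measurable
  have hℓmθ' : ∀ p, Measurable (fun θ => ℓ θ p) := fun p =>
    hℓm.comp (measurable_id.prodMk measurable_const)
  have hgSm : ∀ S, Measurable (g S) := fun S =>
    (measurable_const.mul (hΦm.comp hrm)).sub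
      (measurable_const.mul (Finset.measurable_sum _ fun i _ => hℓmθ' (S i)))
  have hegb : ∀ S θ, |Real.exp (g S θ)| ≤ Real.exp M := by
    intro S θ
    rw [abs_of_pos (Real.exp_pos _)]
    exact Real.exp_le_exp.2 (le_of_abs_le (hgb S θ))
  have hintexp : ∀ S, Integrable (fun θ => Real.exp (g S θ)) P := fun S =>
    aux_bdd (Real.measurable_exp.comp (hgSm S)).aestronglyMeasurable _ (hegb S)
  have hZlb : ∀ S, Real.exp (-M) ≤ Z S := by
    intro S
    calc Real.exp (-M) = ∫ _, Real.exp (-M) ∂P := by simp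
    _ ≤ Z S := by
        apply integral_mono (integrable_const _) (hintexp S)
        intro θ
        exact Real.exp_le_exp.2 (neg_le_of_abs_le (hgb S θ))
  have hZpos : ∀ S, 0 < Z S := fun S => lt_of_lt_of_le (Real.exp_pos _) (hZlb S)
  have hZub : ∀ S, Z S ≤ Real.exp M := by
    intro S
    calc Z S ≤ ∫ _, Real.exp M ∂P :=
        integral_mono (hintexp S) (integrable_const _) fun θ => le_of_abs_le (hegb S θ)
    _ = Real.exp M := by simp
  have hZint : Integrable Z μm :=
    aux_bdd hZm.aestronglyMeasurable (Real.exp M) fun S =>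
      abs_le.2 ⟨by linarith [hZpos S, Real.exp_pos M], hZub S⟩
  haveI hμmP : IsProbabilityMeasure μm :=
    inferInstanceAs (IsProbabilityMeasure (Measure.pi fun _ : Fin m => D))
  letI : MeasureSpace (X × Label) := ⟨D⟩
  haveI : SigmaFinite (volume : Measure (X × Label)) := (inferInstance : SigmaFinite D)
  have hvol : μm = (volume : Measure (Fin m → X × Label)) := rfl
  have hℓcases : ∀ θ p, ℓ θ p = 0 ∨ ℓ θ p = 1 := by
    intro θ p
    simp only [hℓ_def]
    split <;> simp
  have hexpℓ : ∀ θ p, Real.exp (-(C * ℓ θ p)) = 1 - a * ℓ θ p := by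
    intro θ p
    rcases hℓcases θ p with h | h <;> rw [h] <;> simp [ha_def]
  have hprod : ∀ θ S, Real.exp (g S θ) =
      ∏ i : Fin m, (Real.exp (Φ (r θ)) * (1 - a * ℓ θ (S i))) := by
    intro θ S
    have hsum : g S θ = ∑ i : Fin m, (Φ (r θ) + -(C * ℓ θ (S i))) := by
      simp only [hg_def, hL_def, Finset.sum_add_distrib, Finset.sum_const, Finset.card_univ,
        Fintype.card_fin, nsmul_eq_mul, Finset.mul_sum, Finset.sum_neg_distrib]
      ring
    rw [hsum, Real.exp_sum]
    refine Finset.prod_congr rfl fun i _ => ?_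
    rw [Real.exp_add, hexpℓ θ (S i)]
  have hDint : ∀ θ, ∫ p, (Real.exp (Φ (r θ)) * (1 - a * ℓ θ p)) ∂D = 1 := by
    intro θ
    rw [integral_const_mul]
    have h2 : ∫ p, (1 - a * ℓ θ p) ∂D = 1 - a * r θ := by
      rw [integral_sub (integrable_const 1) ((hℓint θ).const_mul a), integral_const_mul]
      simp [hr_def]
    rw [h2]
    have h3 := h1ar' (r θ) (hr0 θ) (hr1 θ)
    simp only [hΦ_def]
    rw [Real.exp_neg, Real.exp_log h3]
    field_simp
  have hkey : ∀ θ, ∫ S, Real.exp (g S θ) ∂μm = 1 := by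
    intro θ
    calc ∫ S, Real.exp (g S θ) ∂μm
        = ∫ S : Fin m → X × Label, ∏ i,
            (fun p => Real.exp (Φ (r θ)) * (1 - a * ℓ θ p)) (S i) := by
          rw [hvol]
          exact integral_congr_ae (Filter.Eventually.of_forall fun S => hprod θ S)
      _ = (∫ p, Real.exp (Φ (r θ)) * (1 - a * ℓ θ p)) ^ Fintype.card (Fin m) :=
          integral_fintype_prod_eq_pow (ι := Fin m) (E := X × Label)
            (fun p => Real.exp (Φ (r θ)) * (1 - a * ℓ θ p))
      _ = 1 := by
          have : (∫ p, Real.exp (Φ (r θ)) * (1 - a * ℓ θ p)) = 1 := hDint θ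
          rw [this, one_pow]
  have hswap : ∫ S, Z S ∂μm = ∫ θ, (∫ S, Real.exp (g S θ) ∂μm) ∂P := by
    apply integral_integral_swap
    exact aux_bdd hegm.aestronglyMeasurable (Real.exp M) fun q => hegb q.1 q.2
  have hEZ : ∫ S, Z S ∂μm = 1 := by
    rw [hswap]
    simp only [hkey]
    simp
  -- Markov
  have hmark := mul_meas_ge_le_integral_of_nonneg
    (Filter.Eventually.of_forall fun S => (hZpos S).le) hZint (1/δ)
  rw [hEZ] at hmark
  have hcompl : μm {S | 1/δ ≤ Z S} ≤ ENNReal.ofReal δ := by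
    have hδ' : (0:ℝ) < 1/δ := by positivity
    have h1 : (μm {S | 1/δ ≤ Z S}).toReal ≤ δ := by
      by_contra hcon
      push_neg at hcon
      have : 1/δ * δ < 1/δ * (μm {S | 1/δ ≤ Z S}).toReal :=
        mul_lt_mul_of_pos_left hcon hδ'
      rw [one_div_mul_cancel (ne_of_gt hδ0)] at this
      rw [measureReal_def] at hmark
      linarith
    calc μm {S | 1/δ ≤ Z S} = ENNReal.ofReal ((μm {S | 1/δ ≤ Z S}).toReal) :=
        (ENNReal.ofReal_toReal (measure_ne_top _ _)).symm
      _ ≤ ENNReal.ofReal δ := ENNReal.ofReal_le_ofReal h1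
  set E : Set (Fin m → X × Label) := {S | Z S < 1/δ} with hE_def
  have hEm : MeasurableSet E := measurableSet_lt hZm measurable_const
  have hμE : ENNReal.ofReal (1 - δ) ≤ μm E := by
    have hEc : μm Eᶜ ≤ ENNReal.ofReal δ := by
      refine le_trans (measure_mono ?_) hcompl
      intro S hS
      simp only [hE_def, Set.mem_compl_iff, Set.mem_setOf_eq, not_lt] at hS ⊢
      exact hS
    have hadd : μm E + μm Eᶜ = 1 := by
      rw [measure_add_measure_compl hEm, measure_univ]
    have h1le : (1:ENNReal) ≤ μm E + ENNReal.ofReal δ := by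
      rw [← hadd]
      exact add_le_add le_rfl hEc
    have : ENNReal.ofReal (1 - δ) = 1 - ENNReal.ofReal δ := by
      rw [ENNReal.ofReal_sub _ hδ0.le, ENNReal.ofReal_one]
    rw [this]
    exact tsub_le_iff_right.mpr h1le
  refine le_trans hμE (measure_mono ?_)
  intro S hS
  have hZS : Z S < 1/δ := hS
  intro Q hQprob hQP hKL
  haveI := hQprob
  set ρ : Θ → ℝ := fun θ => (Q.rnDeriv P θ).toReal with hρ_def
  have hρ0 : ∀ θ, 0 ≤ ρ θ := fun θ => ENNReal.toReal_nonneg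
  have hρint : Integrable ρ P := Measure.integrable_toReal_rnDeriv
  have hρ1 : ∫ θ, ρ θ ∂P = 1 := by
    simp only [hρ_def]
    rw [Measure.integral_toReal_rnDeriv hQP]
    simp
  set lZ : ℝ := Real.log (Z S) with hlZ_def
  set g' : Θ → ℝ := fun θ => g S θ - lZ with hg'_def
  have hg'm : Measurable g' := (hgSm S).sub measurable_const
  have hg'b : ∀ θ, |g' θ| ≤ M + |lZ| := by
    intro θ
    calc |g' θ| ≤ |g S θ| + |lZ| := abs_sub _ _
    _ ≤ M + |lZ| := by linarith [hgb S θ]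
  have hg'intQ : Integrable g' Q := aux_bdd hg'm.aestronglyMeasurable _ hg'b
  have hlhs_int : Integrable (fun θ => ρ θ * g' θ) P := by
    have := (integrable_rnDeriv_smul_iff hQP (f := g')).mpr hg'intQ
    simpa [hρ_def, smul_eq_mul] using this
  have hKLP : Integrable (fun θ => ρ θ * Real.log (ρ θ)) P := by
    have := (integrable_rnDeriv_smul_iff hQP
      (f := fun θ => Real.log (Q.rnDeriv P θ).toReal)).mpr hKL
    simpa [hρ_def, smul_eq_mul] using this
  have hexpg'int : Integrable (fun θ => Real.exp (g' θ)) P := by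
    apply aux_bdd (Real.measurable_exp.comp hg'm).aestronglyMeasurable (Real.exp (M + |lZ|))
    intro θ
    show |Real.exp (g' θ)| ≤ Real.exp (M + |lZ|)
    rw [abs_of_pos (Real.exp_pos _)]
    exact Real.exp_le_exp.2 (le_of_abs_le (hg'b θ))
  have hineq : ∫ θ, ρ θ * g' θ ∂P ≤ ∫ θ, (ρ θ * Real.log (ρ θ) - ρ θ + Real.exp (g' θ)) ∂P := by
    apply integral_mono hlhs_int ((hKLP.sub hρint).add hexpg'int)
    intro θ
    exact aux_young (g' θ) (hρ0 θ)
  have h1 : ∫ θ, ρ θ * g' θ ∂P = ∫ θ, g' θ ∂Q := by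
    have := integral_rnDeriv_smul hQP (f := g')
    simpa [hρ_def, smul_eq_mul] using this
  have h2 : ∫ θ, ρ θ * Real.log (ρ θ) ∂P = klDiv Q P := by
    have := integral_rnDeriv_smul hQP (f := fun θ => Real.log (Q.rnDeriv P θ).toReal)
    simp only [klDiv, hρ_def]
    simpa [smul_eq_mul] using this
  have h3 : ∫ θ, Real.exp (g' θ) ∂P = 1 := by
    have heq : (fun θ => Real.exp (g' θ)) = fun θ => (Real.exp lZ)⁻¹ * Real.exp (g S θ) := by
      funext θ
      simp only [hg'_def]
      rw [Real.exp_sub]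
      field_simp
    rw [heq, integral_const_mul]
    have hZeq : ∫ θ, Real.exp (g S θ) ∂P = Z S := rfl
    rw [hZeq, hlZ_def, Real.exp_log (hZpos S)]
    exact inv_mul_cancel₀ (ne_of_gt (hZpos S))
  have hints : ∫ θ, (ρ θ * Real.log (ρ θ) - ρ θ + Real.exp (g' θ)) ∂P
      = klDiv Q P - 1 + 1 := by
    have e1 : ∫ θ, (ρ θ * Real.log (ρ θ) - ρ θ + Real.exp (g' θ)) ∂P
        = (∫ θ, (ρ θ * Real.log (ρ θ) - ρ θ) ∂P) + ∫ θ, Real.exp (g' θ) ∂P :=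
      integral_add (hKLP.sub hρint) hexpg'int
    have e2 : ∫ θ, (ρ θ * Real.log (ρ θ) - ρ θ) ∂P
        = (∫ θ, ρ θ * Real.log (ρ θ) ∂P) - ∫ θ, ρ θ ∂P :=
      integral_sub hKLP hρint
    rw [e1, e2, h2, hρ1, h3]
  have hDV' : ∫ θ, g' θ ∂Q ≤ klDiv Q P := by
    rw [← h1]
    rw [hints] at hineq
    linarith
  have hgint : Integrable (fun θ => g S θ) Q := aux_bdd (hgSm S).aestronglyMeasurable M (hgb S)
  have hg'dec : ∫ θ, g' θ ∂Q = (∫ θ, g S θ ∂Q) - lZ := by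
    simp only [hg'_def]
    rw [integral_sub hgint (integrable_const lZ)]
    simp
  have hlZle : lZ ≤ -Real.log δ := by
    have := Real.log_le_log (hZpos S) hZS.le
    rw [one_div, Real.log_inv] at this
    simp only [hlZ_def]
    exact this
  have hDV : ∫ θ, g S θ ∂Q ≤ klDiv Q P - Real.log δ := by
    rw [hg'dec] at hDV'
    linarith
  have hΦint : Integrable (fun θ => Φ (r θ)) Q := by
    apply aux_bdd ((hΦm.comp hrm)).aestronglyMeasurable C
    intro θ
    show |Φ (r θ)| ≤ C
    rw [abs_of_nonneg (hΦ0 _ (hr0 θ) (hr1 θ))]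
    exact hΦC _ (hr0 θ) (hr1 θ)
  have hLint : Integrable (fun θ => L θ S) Q := by
    apply aux_bdd ?_ m (fun θ => hLb θ S)
    exact (Finset.measurable_sum _ fun i _ => hℓmθ' (S i)).aestronglyMeasurable
  have hgdec : ∫ θ, g S θ ∂Q = m * (∫ θ, Φ (r θ) ∂Q) - C * ∫ θ, L θ S ∂Q := by
    simp only [hg_def]
    rw [integral_sub ((hΦint.const_mul _)) (hLint.const_mul _), integral_const_mul,
      integral_const_mul]
  set Rs : ℝ := ∫ θ, ((m:ℝ))⁻¹ * L θ S ∂Q with hRs_def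
  have hRsL : ∫ θ, L θ S ∂Q = m * Rs := by
    simp only [hRs_def]
    rw [integral_const_mul]
    field_simp
  set r₀ : ℝ := ∫ θ, r θ ∂Q with hr₀_def
  have hr₀0 : 0 ≤ r₀ := integral_nonneg fun θ => hr0 θ
  have hrintQ : Integrable r Q :=
    aux_bdd hrm.aestronglyMeasurable 1 fun θ => abs_le.2 ⟨by linarith [hr0 θ], hr1 θ⟩
  have hr₀1 : r₀ ≤ 1 := by
    simp only [hr₀_def]
    calc ∫ θ, r θ ∂Q ≤ ∫ _, (1:ℝ) ∂Q := integral_mono hrintQ (integrable_const 1) fun θ => hr1 θ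
    _ = 1 := by simp
  have htan : Φ r₀ ≤ ∫ θ, Φ (r θ) ∂Q := by
    have hpt : ∀ θ, Φ r₀ + (a / (1 - a * r₀)) * (r θ - r₀) ≤ Φ (r θ) := fun θ =>
      aux_tangent ha0 ha1 (hr1 θ) hr₀1
    have hlin : Integrable (fun θ => Φ r₀ + (a / (1 - a * r₀)) * (r θ - r₀)) Q :=
      (integrable_const _).add ((hrintQ.sub (integrable_const _)).const_mul _)
    have hmono := integral_mono hlin hΦint hpt
    have heq : ∫ θ, (Φ r₀ + (a / (1 - a * r₀)) * (r θ - r₀)) ∂Q = Φ r₀ := by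
      have e1 : ∫ θ, (Φ r₀ + (a / (1 - a * r₀)) * (r θ - r₀)) ∂Q
          = (∫ _, Φ r₀ ∂Q) + ∫ θ, (a / (1 - a * r₀)) * (r θ - r₀) ∂Q :=
        integral_add (integrable_const _) ((hrintQ.sub (integrable_const _)).const_mul _)
      have e2 : ∫ θ, (a / (1 - a * r₀)) * (r θ - r₀) ∂Q
          = (a / (1 - a * r₀)) * ∫ θ, (r θ - r₀) ∂Q := integral_const_mul _ _
      have e3 : ∫ θ, (r θ - r₀) ∂Q = (∫ θ, r θ ∂Q) - ∫ _, r₀ ∂Q :=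
        integral_sub hrintQ (integrable_const _)
      rw [e1, e2, e3]
      simp [← hr₀_def]
    rw [← heq]
    exact hmono
  set B : ℝ := C * Rs + (1/(m:ℝ)) * (klDiv Q P - Real.log δ) with hB_def
  have hΦB : Φ r₀ ≤ B := by
    rw [hRsL] at hgdec
    have h4 : (m:ℝ) * (∫ θ, Φ (r θ) ∂Q) ≤ C * ((m:ℝ) * Rs) + (klDiv Q P - Real.log δ) := by
      linarith [hDV, hgdec]
    have h5 : (∫ θ, Φ (r θ) ∂Q) ≤ B := by
      have hm' : (m:ℝ) ≠ 0 := ne_of_gt hm0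
      have h6 := mul_le_mul_of_nonneg_left h4 (le_of_lt (inv_pos.2 hm0))
      calc (∫ θ, Φ (r θ) ∂Q) = (m:ℝ)⁻¹ * ((m:ℝ) * (∫ θ, Φ (r θ) ∂Q)) := by field_simp
      _ ≤ (m:ℝ)⁻¹ * (C * ((m:ℝ) * Rs) + (klDiv Q P - Real.log δ)) := h6
      _ = B := by
          simp only [hB_def]
          field_simp
    linarith [htan]
  have hfin : r₀ ≤ (1/a) * (1 - Real.exp (-B)) := by
    have hpos := h1ar' r₀ hr₀0 hr₀1
    have h6 : -B ≤ Real.log (1 - a * r₀) := by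
      simp only [hΦ_def] at hΦB
      linarith [hΦB]
    have h7 : Real.exp (-B) ≤ 1 - a * r₀ := by
      calc Real.exp (-B) ≤ Real.exp (Real.log (1 - a * r₀)) := Real.exp_le_exp.2 h6
      _ = 1 - a * r₀ := Real.exp_log hpos
    have h8 : a * r₀ ≤ 1 - Real.exp (-B) := by linarith
    calc r₀ = (1/a) * (a * r₀) := by field_simp
    _ ≤ (1/a) * (1 - Real.exp (-B)) :=
        mul_le_mul_of_nonneg_left h8 (by positivity)
  show (∫ θ, r θ ∂Q) ≤ (1/a) * (1 - Real.exp
    (-C * Rs - (1/(m:ℝ)) * (klDiv Q P - Real.log δ)))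
  have hexp_eq : -C * Rs - (1/(m:ℝ)) * (klDiv Q P - Real.log δ) = -B := by
    simp only [hB_def]
    ring
  rw [hexp_eq, ← hr₀_def]
  exact hfin
end

section
/- (Theorem 2, semi-supervised PAC-Bayes bound). Let D be a probability measure on X × Y, let P be a (prior) probability measure on Θ, let δ ∈ (0,1], C > 0 and m ≥ 1. Then with probability at least 1 − δ over the draw of an i.i.d. sample S = ((x_1,y_1),…,(x_m,y_m)) ∼ D^{⊗m}, for every (posterior) probability measure Q on Θ that is absolutely continuous with respect to P and has finite KL(Q‖P), the true risk of the Gibbs classifier satisfies R(G_Q) ≤ (1/(1 − e^{−C})) · [1 − exp( −C·(e_S(G_Q) + (1/2)·d_S(G_Q)) − (1/m)·(KL(Q‖P) − ln δ) )]. -/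
open MeasureTheory

lemma integrable_of_bdd {α : Type*} [MeasurableSpace α] {μ : Measure α} [IsFiniteMeasure μ]
    {f : α → ℝ} (hf : AEStronglyMeasurable f μ) {B : ℝ} (hB : ∀ x, ‖f x‖ ≤ B) :
    Integrable f μ :=
  ⟨hf, HasFiniteIntegral.of_bounded (C := B) (Filter.Eventually.of_forall hB)⟩

/-- Donsker–Varadhan change of measure inequality for bounded measurable `h`. -/
lemma dv_bound {Θ : Type*} [MeasurableSpace Θ] {P Q : Measure Θ}
    [IsProbabilityMeasure P] [IsProbabilityMeasure Q] (hQP : Q ≪ P)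
    (hKL : Integrable (fun θ => Real.log (Q.rnDeriv P θ).toReal) Q)
    {h : Θ → ℝ} (hmeas : Measurable h) {B : ℝ} (hB : ∀ θ, |h θ| ≤ B) :
    ∫ θ, h θ ∂Q ≤ klDiv Q P + Real.log (∫ θ, Real.exp (h θ) ∂P) := by
  set g : Θ → ℝ := fun θ => (Q.rnDeriv P θ).toReal with hg_def
  have hg_meas : Measurable g := (Measure.measurable_rnDeriv Q P).ennreal_toReal
  set Z : ℝ := ∫ θ, Real.exp (h θ) ∂P with hZ_def
  have hexp_meas : Measurable fun θ => Real.exp (h θ) := Real.measurable_exp.comp hmeas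
  have hexp_bdd : ∀ θ, ‖Real.exp (h θ)‖ ≤ Real.exp B := fun θ => by
    rw [Real.norm_eq_abs, abs_of_pos (Real.exp_pos _)]
    exact Real.exp_le_exp.mpr ((le_abs_self _).trans (hB θ))
  have hexp_int : Integrable (fun θ => Real.exp (h θ)) P :=
    integrable_of_bdd hexp_meas.aestronglyMeasurable hexp_bdd
  have hZ_pos : 0 < Z := by
    have hle : Real.exp (-B) ≤ Z := by
      calc Real.exp (-B) = ∫ _, Real.exp (-B) ∂P := by simp
      _ ≤ Z := integral_mono (integrable_const _) hexp_int fun θ =>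
          Real.exp_le_exp.mpr ((neg_le_neg (hB θ)).trans (neg_abs_le _))
    linarith [Real.exp_pos (-B)]
  -- the function f = e^h / g, with g • f integrable w.r.t. P
  set f : Θ → ℝ := fun θ => Real.exp (h θ) * (g θ)⁻¹ with hf_def
  have hgf_meas : Measurable fun θ => g θ • f θ := hg_meas.smul (hexp_meas.mul hg_meas.inv)
  have hgf_eq : ∀ θ, g θ • f θ = if g θ = 0 then 0 else Real.exp (h θ) := by
    intro θ; by_cases hgθ : g θ = 0
    · simp [hf_def, hgθ]
    · rw [if_neg hgθ, smul_eq_mul, hf_def]; field_simp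
  have hgf_bdd : ∀ θ, ‖g θ • f θ‖ ≤ Real.exp B := fun θ => by
    rw [hgf_eq θ]; by_cases hgθ : g θ = 0
    · simp [hgθ, (Real.exp_pos B).le]
    · simp only [hgθ, if_false]; exact hexp_bdd θ
  have hgf_int : Integrable (fun θ => g θ • f θ) P :=
    integrable_of_bdd hgf_meas.aestronglyMeasurable hgf_bdd
  have hf_int : Integrable f Q := (integrable_rnDeriv_smul_iff hQP).mp hgf_int
  have hfQ_le : ∫ θ, f θ ∂Q ≤ Z := by
    rw [← integral_rnDeriv_smul hQP]
    refine integral_mono hgf_int hexp_int fun θ => ?_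
    rw [hgf_eq θ]; by_cases hgθ : g θ = 0
    · simp [hgθ, (Real.exp_pos _).le]
    · simp [hgθ]
  -- a.e. positivity and finiteness of g under Q
  have hg_pos : ∀ᵐ θ ∂Q, 0 < g θ := by
    filter_upwards [Measure.rnDeriv_pos hQP, hQP.ae_le (Measure.rnDeriv_lt_top Q P)]
      with θ h1 h2
    exact ENNReal.toReal_pos h1.ne' h2.ne
  -- pointwise tangent inequality
  have hpt : ∀ᵐ θ ∂Q, h θ - Real.log (g θ) - Real.log Z ≤ f θ / Z - 1 := by
    filter_upwards [hg_pos] with θ hgθ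
    have hfrac_pos : 0 < Real.exp (h θ) / (g θ * Z) := by positivity
    have hlog := Real.log_le_sub_one_of_pos hfrac_pos
    rw [Real.log_div (Real.exp_pos _).ne' (by positivity),
      Real.log_mul hgθ.ne' hZ_pos.ne', Real.log_exp] at hlog
    have heq : Real.exp (h θ) / (g θ * Z) = f θ / Z := by
      rw [hf_def]; simp only; field_simp
    rw [heq] at hlog
    linarith
  -- integrate
  have hh_int : Integrable h Q := integrable_of_bdd hmeas.aestronglyMeasurable
      (fun θ => by rw [Real.norm_eq_abs]; exact hB θ)
  have hlhs_int : Integrable (fun θ => h θ - Real.log (g θ) - Real.log Z) Q :=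
    (hh_int.sub hKL).sub (integrable_const _)
  have hrhs_int : Integrable (fun θ => f θ / Z - 1) Q := by
    exact (hf_int.div_const Z).sub (integrable_const 1)
  have hint_le := integral_mono_ae hlhs_int hrhs_int hpt
  have e1 : ∫ θ, (h θ - Real.log (g θ) - Real.log Z) ∂Q
      = (∫ θ, (h θ - Real.log (g θ)) ∂Q) - Real.log Z := by
    rw [integral_sub (f := fun θ => h θ - Real.log (g θ)) (g := fun _ => Real.log Z)
      (hh_int.sub hKL) (integrable_const _)]; simp
  have e2 : ∫ θ, (h θ - Real.log (g θ)) ∂Q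
      = (∫ θ, h θ ∂Q) - ∫ θ, Real.log (g θ) ∂Q :=
    integral_sub (f := h) (g := fun θ => Real.log (g θ)) hh_int hKL
  have e3 : ∫ θ, (f θ / Z - 1) ∂Q = (∫ θ, f θ ∂Q) / Z - 1 := by
    rw [integral_sub (f := fun θ => f θ / Z) (g := fun _ => (1:ℝ))
      (by simpa [div_eq_mul_inv] using hf_int.mul_const Z⁻¹) (integrable_const 1), integral_div]
    simp
  rw [e1, e2, e3] at hint_le
  have e4 : (∫ θ, f θ ∂Q) / Z - 1 ≤ 0 := by
    rw [sub_nonpos, div_le_one hZ_pos]; exact hfQ_le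
  have hkl : klDiv Q P = ∫ θ, Real.log (g θ) ∂Q := rfl
  rw [hkl]
  linarith

set_option maxHeartbeats 2000000 in
lemma aux_main {X' Θ : Type*} [MeasurableSpace X'] [MeasurableSpace Θ]
    (err : Θ → X' → ℝ) (herr : Measurable fun q : Θ × X' => err q.1 q.2)
    (herr01 : ∀ θ p, err θ p = 0 ∨ err θ p = 1)
    (D : Measure X') [IsProbabilityMeasure D]
    (P : Measure Θ) [IsProbabilityMeasure P]
    (δ C : ℝ) (hδ0 : 0 < δ) (hδ1 : δ ≤ 1) (hC : 0 < C) (m : ℕ) (hm : 1 ≤ m) :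
    ENNReal.ofReal (1 - δ) ≤
      (Measure.pi fun _ : Fin m => D)
        {S : Fin m → X' |
          ∀ Q : Measure Θ, IsProbabilityMeasure Q → Q ≪ P →
            Integrable (fun θ => Real.log (Q.rnDeriv P θ).toReal) Q →
            (∫ θ, ∫ p, err θ p ∂D ∂Q) ≤
              (1 / (1 - Real.exp (-C))) *
                (1 - Real.exp (-C * ((m:ℝ)⁻¹ * ∑ i : Fin m, ∫ θ, err θ (S i) ∂Q)
                  - (1 / (m : ℝ)) * (klDiv Q P - Real.log δ)))} := by
  classical
  have hm0 : (0:ℝ) < m := by exact_mod_cast hm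
  set c : ℝ := 1 - Real.exp (-C) with hc_def
  have hexpC : Real.exp (-C) < 1 := by
    rw [Real.exp_lt_one_iff]; linarith
  have hc0 : 0 < c := by rw [hc_def]; linarith
  have hc1 : c < 1 := by have := Real.exp_pos (-C); rw [hc_def]; linarith
  -- basic properties of err
  have herr_nonneg : ∀ θ p, 0 ≤ err θ p := fun θ p => by
    rcases herr01 θ p with h | h <;> rw [h] <;> norm_num
  have herr_le1 : ∀ θ p, err θ p ≤ 1 := fun θ p => by
    rcases herr01 θ p with h | h <;> rw [h] <;> norm_num
  have herr_norm : ∀ θ p, ‖err θ p‖ ≤ 1 := fun θ p => by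
    rw [Real.norm_eq_abs, abs_of_nonneg (herr_nonneg θ p)]; exact herr_le1 θ p
  have herr_measθ : ∀ p, Measurable fun θ => err θ p := fun p =>
    herr.comp (measurable_id.prodMk measurable_const)
  have herr_measp : ∀ θ, Measurable fun p => err θ p := fun θ =>
    herr.comp (measurable_const.prodMk measurable_id)
  have herr_intD : ∀ θ, Integrable (fun p => err θ p) D := fun θ =>
    integrable_of_bdd (herr_measp θ).aestronglyMeasurable (herr_norm θ)
  -- true risk
  set Rk : Θ → ℝ := fun θ => ∫ p, err θ p ∂D with hRk_def
  have hRk_sm : StronglyMeasurable Rk :=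
    (herr.stronglyMeasurable : StronglyMeasurable fun q : Θ × X' => err q.1 q.2).integral_prod_right'
  have hRk0 : ∀ θ, 0 ≤ Rk θ := fun θ => integral_nonneg (herr_nonneg θ)
  have hRk1 : ∀ θ, Rk θ ≤ 1 := fun θ => by
    calc Rk θ ≤ ∫ _, (1:ℝ) ∂D :=
          integral_mono (herr_intD θ) (integrable_const _) (herr_le1 θ)
    _ = 1 := by simp
  set a : Θ → ℝ := fun θ => 1 - c * Rk θ with ha_def
  have ha_meas : Measurable a := measurable_const.sub (hRk_sm.measurable.const_mul c)
  have ha_lb : ∀ θ, Real.exp (-C) ≤ a θ := fun θ => by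
    have h1 := hRk1 θ
    have : c * Rk θ ≤ c := by nlinarith
    simp only [ha_def]; rw [hc_def] at this ⊢; linarith
  have ha_pos : ∀ θ, 0 < a θ := fun θ => lt_of_lt_of_le (Real.exp_pos _) (ha_lb θ)
  have ha_le1 : ∀ θ, a θ ≤ 1 := fun θ => by
    have h1 := hRk0 θ
    have : 0 ≤ c * Rk θ := mul_nonneg hc0.le h1
    simp only [ha_def]; linarith
  set Fc : Θ → ℝ := fun θ => -Real.log (a θ) with hFc_def
  have hFc_meas : Measurable Fc := (Real.measurable_log.comp ha_meas).neg
  have hFc0 : ∀ θ, 0 ≤ Fc θ := fun θ => by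
    simp only [hFc_def, neg_nonneg]
    exact Real.log_nonpos (ha_pos θ).le (ha_le1 θ)
  have hFcC : ∀ θ, Fc θ ≤ C := fun θ => by
    have := Real.log_le_log (Real.exp_pos (-C)) (ha_lb θ)
    rw [Real.log_exp] at this
    simp only [hFc_def]; linarith
  -- single sample identity : ∫ exp(-(C * err θ p)) dD = a θ
  have hone : ∀ θ, ∫ p, Real.exp (-(C * err θ p)) ∂D = a θ := by
    intro θ
    have hpt : ∀ p, Real.exp (-(C * err θ p)) = 1 - c * err θ p := by
      intro p
      rcases herr01 θ p with h | h <;> rw [h] <;> simp [hc_def]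
    simp_rw [hpt]
    rw [integral_sub (integrable_const _) ((herr_intD θ).const_mul c), integral_const,
      integral_const_mul]
    simp [ha_def, hRk_def]
  -- the sample measure
  set μm : Measure (Fin m → X') := Measure.pi fun _ => D with hμm_def
  haveI : IsProbabilityMeasure μm := by rw [hμm_def]; infer_instance
  -- product identity
  have hprod : ∀ θ, ∫ S, Real.exp (-(C * ∑ i, err θ (S i))) ∂μm = a θ ^ m := by
    intro θ
    letI : MeasureSpace X' := ⟨D⟩
    letI : SigmaFinite (volume : Measure X') := inferInstanceAs (SigmaFinite D)
    have h1 : ∀ S : Fin m → X', Real.exp (-(C * ∑ i, err θ (S i)))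
        = ∏ i, Real.exp (-(C * err θ (S i))) := by
      intro S
      rw [← Real.exp_sum]
      congr 1
      rw [Finset.mul_sum, ← Finset.sum_neg_distrib]
    simp_rw [h1]
    have h2 := MeasureTheory.integral_fintype_prod_eq_pow (𝕜 := ℝ) (ι := Fin m) (μ := (volume : Measure X'))
      (fun p => Real.exp (-(C * err θ p)))
    calc ∫ S, ∏ i, Real.exp (-(C * err θ (S i))) ∂μm
        = ∫ S : Fin m → X', ∏ i, Real.exp (-(C * err θ (S i))) := rfl
      _ = (∫ p, Real.exp (-(C * err θ p))) ^ Fintype.card (Fin m) := h2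
      _ = (∫ p, Real.exp (-(C * err θ p))) ^ m := by rw [Fintype.card_fin]
      _ = (∫ p, Real.exp (-(C * err θ p)) ∂D) ^ m := rfl
      _ = a θ ^ m := by rw [hone θ]
  -- the exponential process
  set hS : (Fin m → X') → Θ → ℝ := fun S θ => (m:ℝ) * Fc θ - C * ∑ i, err θ (S i) with hhS_def
  have hsum_meas : Measurable fun q : (Fin m → X') × Θ => ∑ i, err q.2 (q.1 i) :=
    Finset.measurable_sum _ fun i _ =>
      herr.comp (measurable_snd.prodMk ((measurable_pi_apply i).comp measurable_fst))
  have hhS_meas : Measurable fun q : (Fin m → X') × Θ => hS q.1 q.2 :=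
    ((hFc_meas.comp measurable_snd).const_mul ((m:ℝ))).sub (hsum_meas.const_mul C)
  have hsum_nonneg : ∀ (S : Fin m → X') (θ), 0 ≤ ∑ i, err θ (S i) := fun S θ =>
    Finset.sum_nonneg fun i _ => herr_nonneg _ _
  have hsum_le : ∀ (S : Fin m → X') (θ), ∑ i, err θ (S i) ≤ m := fun S θ => by
    calc ∑ i, err θ (S i) ≤ ∑ _i : Fin m, (1:ℝ) :=
          Finset.sum_le_sum fun i _ => herr_le1 _ _
    _ = m := by simp
  have hhS_bdd : ∀ (S : Fin m → X') (θ), |hS S θ| ≤ 2 * (C * m) := by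
    intro S θ
    rw [abs_le]; constructor
    · have h1 := hFc0 θ; have h2 := hsum_le S θ
      simp only [hhS_def]; nlinarith
    · have h1 := hFcC θ; have h2 := hsum_nonneg S θ
      simp only [hhS_def]; nlinarith
  have hφ_meas : Measurable fun q : (Fin m → X') × Θ => Real.exp (hS q.1 q.2) :=
    Real.measurable_exp.comp hhS_meas
  have hφ_bdd : ∀ q : (Fin m → X') × Θ, ‖Real.exp (hS q.1 q.2)‖ ≤ Real.exp (2*(C*m)) := fun q => by
    rw [Real.norm_eq_abs, abs_of_pos (Real.exp_pos _)]
    exact Real.exp_le_exp.mpr ((le_abs_self _).trans (hhS_bdd _ _))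
  have hφ_int : Integrable (fun q : (Fin m → X') × Θ => Real.exp (hS q.1 q.2)) (μm.prod P) :=
    integrable_of_bdd hφ_meas.aestronglyMeasurable hφ_bdd
  have hswap : ∫ S, ∫ θ, Real.exp (hS S θ) ∂P ∂μm = ∫ θ, ∫ S, Real.exp (hS S θ) ∂μm ∂P :=
    integral_integral_swap hφ_int
  have hinner : ∀ θ, ∫ S, Real.exp (hS S θ) ∂μm = 1 := by
    intro θ
    have hpt : ∀ S, Real.exp (hS S θ)
        = Real.exp ((m:ℝ) * Fc θ) * Real.exp (-(C * ∑ i, err θ (S i))) := by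
      intro S
      simp only [hhS_def]
      rw [Real.exp_neg, ← div_eq_mul_inv, ← Real.exp_sub]
    simp_rw [hpt]
    rw [integral_const_mul, hprod θ]
    have he : Real.exp ((m:ℝ) * Fc θ) = (a θ)⁻¹ ^ m := by
      rw [Real.exp_nat_mul]
      congr 1
      simp only [hFc_def]
      rw [Real.exp_neg, Real.exp_log (ha_pos θ)]
    rw [he, ← mul_pow, inv_mul_cancel₀ (ha_pos θ).ne', one_pow]
  have htotal : ∫ S, ∫ θ, Real.exp (hS S θ) ∂P ∂μm = 1 := by
    rw [hswap]; simp_rw [hinner]; simp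
  set IP : (Fin m → X') → ℝ := fun S => ∫ θ, Real.exp (hS S θ) ∂P with hIP_def
  have hIP_sm : StronglyMeasurable IP :=
    (hφ_meas.stronglyMeasurable :
      StronglyMeasurable fun q : (Fin m → X') × Θ => Real.exp (hS q.1 q.2)).integral_prod_right'
  have hIP_nonneg : ∀ S, 0 ≤ IP S := fun S => integral_nonneg fun θ => (Real.exp_pos _).le
  have hIP_int : Integrable IP μm := hφ_int.integral_prod_left
  have hmarkov := mul_meas_ge_le_integral_of_nonneg
    (Filter.Eventually.of_forall hIP_nonneg) hIP_int (1/δ)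
  rw [htotal] at hmarkov
  set Egood : Set (Fin m → X') := {S | IP S ≤ 1/δ} with hEg_def
  have hEg_meas : MeasurableSet Egood := measurableSet_le hIP_sm.measurable measurable_const
  have hcompl_le : μm Egoodᶜ ≤ ENNReal.ofReal δ := by
    have hsub : Egoodᶜ ⊆ {S | 1/δ ≤ IP S} := by
      intro S hs
      simp only [Set.mem_compl_iff, hEg_def, Set.mem_setOf_eq, not_le] at hs
      exact le_of_lt hs
    refine le_trans (measure_mono hsub) ?_
    have hne : μm {S | 1/δ ≤ IP S} ≠ ⊤ := measure_ne_top _ _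
    rw [ENNReal.le_ofReal_iff_toReal_le hne hδ0.le]
    have hd : 0 < 1/δ := by positivity
    by_contra hcon
    push_neg at hcon
    have h3 := mul_lt_mul_of_pos_left hcon hd
    rw [one_div, inv_mul_cancel₀ hδ0.ne'] at h3
    rw [one_div] at hmarkov
    change δ⁻¹ * (μm {x | δ⁻¹ ≤ IP x}).toReal ≤ 1 at hmarkov
    linarith
  have hEg_ge : ENNReal.ofReal (1 - δ) ≤ μm Egood := by
    have h1 : (1:ENNReal) ≤ μm Egood + ENNReal.ofReal δ := by
      have hcompl := measure_add_measure_compl (μ := μm) hEg_meas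
      rw [measure_univ] at hcompl
      calc (1:ENNReal) = μm Egood + μm Egoodᶜ := hcompl.symm
      _ ≤ μm Egood + ENNReal.ofReal δ := add_le_add_right hcompl_le _
    have h2 : ENNReal.ofReal (1-δ) = 1 - ENNReal.ofReal δ := by
      rw [← ENNReal.ofReal_one, ← ENNReal.ofReal_sub _ hδ0.le]
    rw [h2, tsub_le_iff_right]
    exact h1
  refine le_trans hEg_ge (measure_mono ?_)
  intro S hSg
  simp only [hEg_def, Set.mem_setOf_eq] at hSg ⊢
  intro Q hQprob hQP hKLint
  haveI := hQprob
  -- integrabilities over Q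
  have hFc_intQ : Integrable Fc Q := integrable_of_bdd hFc_meas.aestronglyMeasurable
    (B := C) fun θ => by rw [Real.norm_eq_abs, abs_of_nonneg (hFc0 θ)]; exact hFcC θ
  have herr_intQ : ∀ p, Integrable (fun θ => err θ p) Q := fun p =>
    integrable_of_bdd (herr_measθ p).aestronglyMeasurable (fun θ => herr_norm θ p)
  have hsum_intQ : Integrable (fun θ => ∑ i, err θ (S i)) Q :=
    integrable_finset_sum _ fun i _ => herr_intQ (S i)
  have hhS_measθ : Measurable (hS S) :=
    hhS_meas.comp (measurable_const.prodMk measurable_id)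
  -- Donsker–Varadhan
  have hdv := dv_bound hQP hKLint hhS_measθ (hhS_bdd S)
  have hsplit : ∫ θ, hS S θ ∂Q
      = (m:ℝ) * (∫ θ, Fc θ ∂Q) - C * ∑ i, ∫ θ, err θ (S i) ∂Q := by
    simp only [hhS_def]
    rw [integral_sub (hFc_intQ.const_mul _) (hsum_intQ.const_mul _), integral_const_mul,
      integral_const_mul, integral_finset_sum _ (fun i _ => herr_intQ (S i))]
  have hexpS_int : Integrable (fun θ => Real.exp (hS S θ)) P :=
    integrable_of_bdd (Real.measurable_exp.comp hhS_measθ).aestronglyMeasurable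
      (fun θ => hφ_bdd (S, θ))
  have hIP_pos : 0 < IP S := by
    have hle : Real.exp (-(2*(C*m))) ≤ IP S := by
      calc Real.exp (-(2*(C*m))) = ∫ _, Real.exp (-(2*(C*m))) ∂P := by simp
      _ ≤ IP S := integral_mono (integrable_const _) hexpS_int fun θ =>
          Real.exp_le_exp.mpr ((neg_le_neg (hhS_bdd S θ)).trans (neg_abs_le _))
    linarith [Real.exp_pos (-(2*(C*m)))]
  have hlog_le : Real.log (IP S) ≤ -Real.log δ := by
    have := Real.log_le_log hIP_pos hSg
    rwa [one_div, Real.log_inv] at this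
  -- Jensen via tangent of log
  set Rbar : ℝ := ∫ θ, Rk θ ∂Q with hRbar_def
  have hRk_intQ : Integrable Rk Q := integrable_of_bdd hRk_sm.aestronglyMeasurable
    (B := 1) fun θ => by rw [Real.norm_eq_abs, abs_of_nonneg (hRk0 θ)]; exact hRk1 θ
  have hRbar0 : 0 ≤ Rbar := integral_nonneg fun θ => hRk0 θ
  have hRbar1 : Rbar ≤ 1 := by
    calc Rbar ≤ ∫ _, (1:ℝ) ∂Q := integral_mono hRk_intQ (integrable_const _) hRk1
    _ = 1 := by simp
  set abar : ℝ := 1 - c * Rbar with habar_def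
  have habar_pos : 0 < abar := by rw [habar_def]; nlinarith
  have ha_intQ : Integrable a Q := by
    have : Integrable (fun θ => 1 - c * Rk θ) Q :=
      (integrable_const 1).sub (hRk_intQ.const_mul c)
    simpa [ha_def] using this
  have haQ : ∫ θ, a θ ∂Q = abar := by
    simp only [ha_def]
    rw [integral_sub (integrable_const _) (hRk_intQ.const_mul c), integral_const,
      integral_const_mul]
    simp [habar_def, hRbar_def]
  have hJ : -Real.log abar ≤ ∫ θ, Fc θ ∂Q := by
    have hrhs_int : Integrable (fun θ => Fc θ + (a θ / abar - 1)) Q :=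
      hFc_intQ.add ((ha_intQ.div_const _).sub (integrable_const 1))
    have hpt : ∀ θ, -Real.log abar ≤ Fc θ + (a θ / abar - 1) := by
      intro θ
      have h1 := Real.log_le_sub_one_of_pos (div_pos (ha_pos θ) habar_pos)
      rw [Real.log_div (ha_pos θ).ne' habar_pos.ne'] at h1
      simp only [hFc_def]; linarith
    have hint : ∫ _, -Real.log abar ∂Q ≤ ∫ θ, (Fc θ + (a θ / abar - 1)) ∂Q :=
      integral_mono (integrable_const _) hrhs_int hpt
    rw [integral_const, integral_add (f := Fc) (g := fun θ => a θ / abar - 1) hFc_intQ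
        ((ha_intQ.div_const _).sub (integrable_const 1)),
      integral_sub (f := fun θ => a θ / abar) (g := fun _ => (1:ℝ)) (ha_intQ.div_const _)
        (integrable_const 1), integral_div, haQ, integral_const] at hint
    have hdd : abar / abar = 1 := div_self habar_pos.ne'
    simp only [Measure.real, measure_univ, ENNReal.toReal_one, smul_eq_mul, one_mul, hdd] at hint
    linarith
  have hmain : (m:ℝ) * (-Real.log abar)
      ≤ C * ∑ i, ∫ θ, err θ (S i) ∂Q + (klDiv Q P - Real.log δ) := by
    have h1 : ∫ θ, hS S θ ∂Q ≤ klDiv Q P + Real.log (IP S) := hdv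
    have h2 : (m:ℝ) * (-Real.log abar) ≤ (m:ℝ) * ∫ θ, Fc θ ∂Q :=
      mul_le_mul_of_nonneg_left hJ (by positivity)
    linarith [h1, hsplit, h2, hlog_le]
  set T : ℝ := C * ((m:ℝ)⁻¹ * ∑ i, ∫ θ, err θ (S i) ∂Q)
      + (1/(m:ℝ)) * (klDiv Q P - Real.log δ) with hT_def
  have hTm : T * m = C * ∑ i, ∫ θ, err θ (S i) ∂Q + (klDiv Q P - Real.log δ) := by
    rw [hT_def]; field_simp
  have hlogabar : -T ≤ Real.log abar := by
    nlinarith [hmain, hm0]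
  have hexp : Real.exp (-T) ≤ abar := by
    calc Real.exp (-T) ≤ Real.exp (Real.log abar) := Real.exp_le_exp.mpr hlogabar
    _ = abar := Real.exp_log habar_pos
  have hExpEq : -C * ((m:ℝ)⁻¹ * ∑ i, ∫ θ, err θ (S i) ∂Q)
      - (1/(m:ℝ)) * (klDiv Q P - Real.log δ) = -T := by rw [hT_def]; ring
  rw [hExpEq]
  have hcr : c * Rbar ≤ 1 - Real.exp (-T) := by
    rw [habar_def] at hexp; linarith
  calc Rbar = (1/c) * (c * Rbar) := by field_simp
  _ ≤ (1/c) * (1 - Real.exp (-T)) :=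
      mul_le_mul_of_nonneg_left hcr (by positivity)

lemma label_eq_of_ne_of_ne {a b y : Label} (ha : a ≠ y) (hb : b ≠ y) : a = b := by
  obtain ⟨a, ha'⟩ := a; obtain ⟨b, hb'⟩ := b; obtain ⟨y, hy'⟩ := y
  simp only [Set.mem_insert_iff, Set.mem_singleton_iff] at ha' hb' hy'
  apply Subtype.ext
  simp only [ne_eq, Subtype.mk.injEq] at ha hb
  rcases ha' with rfl|rfl <;> rcases hb' with rfl|rfl <;> rcases hy' with rfl|rfl <;> simp_all

lemma ind_ne_eq {a b y : Label} :
    (if a ≠ b then (1:ℝ) else 0) =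
      (if a ≠ y then (1:ℝ) else 0) + (if b ≠ y then (1:ℝ) else 0)
        - 2 * ((if a ≠ y then (1:ℝ) else 0) * (if b ≠ y then (1:ℝ) else 0)) := by
  by_cases ha : a = y <;> by_cases hb : b = y
  · subst ha; subst hb; simp
  · subst ha; simp [Ne.symm hb, hb]
  · subst hb; simp [ha]
  · have : a = b := label_eq_of_ne_of_ne ha hb
    subst this; simp [ha]; ring

set_option maxHeartbeats 1000000 in
/-- **Theorem 2 (semi-supervised PAC-Bayes bound).**
With probability at least `1 - δ` over the draw of an i.i.d. sample `S ∼ D^{⊗m}`,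
every posterior `Q ≪ P` with finite `KL(Q‖P)` satisfies
`R(G_Q) ≤ (1/(1 - e^{-C})) (1 - exp(-C (e_S(G_Q) + d_S(G_Q)/2) - (1/m)(KL(Q‖P) - ln δ)))`,
where `e_S` is the joint (agreement) error and `d_S` the disagreement over two
independent draws `(θ₁, θ₂) ∼ Q ⊗ Q`. -/
theorem pac_bayes_semi_supervised
    {X Θ : Type*} [MeasurableSpace X] [MeasurableSpace Θ]
    (F : Θ → X → Label) (hF : Measurable fun p : Θ × X => F p.1 p.2)
    (D : Measure (X × Label)) [IsProbabilityMeasure D]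
    (P : Measure Θ) [IsProbabilityMeasure P]
    (δ : ℝ) (hδ0 : 0 < δ) (hδ1 : δ ≤ 1)
    (C : ℝ) (hC : 0 < C)
    (m : ℕ) (hm : 1 ≤ m) :
    ENNReal.ofReal (1 - δ) ≤
      (Measure.pi fun _ : Fin m => D)
        {S : Fin m → X × Label |
          ∀ Q : Measure Θ, IsProbabilityMeasure Q → Q ≪ P →
            Integrable (fun θ => Real.log (Q.rnDeriv P θ).toReal) Q →
            (∫ θ, ∫ p, (if F θ p.1 ≠ p.2 then (1 : ℝ) else 0) ∂D ∂Q) ≤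
              (1 / (1 - Real.exp (-C))) *
                (1 - Real.exp
                  (-C *
                    ((∫ θ₁, ∫ θ₂, (m : ℝ)⁻¹ *
                        ∑ i : Fin m,
                          (if F θ₁ (S i).1 ≠ (S i).2 then (1 : ℝ) else 0) *
                          (if F θ₂ (S i).1 ≠ (S i).2 then (1 : ℝ) else 0) ∂Q ∂Q)
                     + (1 / 2) *
                       (∫ θ₁, ∫ θ₂, (m : ℝ)⁻¹ *
                          ∑ i : Fin m,
                            (if F θ₁ (S i).1 ≠ F θ₂ (S i).1 then (1 : ℝ) else 0) ∂Q ∂Q))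
                   - (1 / (m : ℝ)) * (klDiv Q P - Real.log δ)))} := by
  classical
  set err : Θ → X × Label → ℝ := fun θ p => if F θ p.1 ≠ p.2 then (1:ℝ) else 0 with herr_def
  have hL1 : Measurable fun q : Θ × (X × Label) => F q.1 q.2.1 :=
    hF.comp (measurable_fst.prodMk measurable_snd.fst)
  have hL2 : Measurable fun q : Θ × (X × Label) => q.2.2 := measurable_snd.snd
  have hset : MeasurableSet {q : Θ × (X × Label) | F q.1 q.2.1 = q.2.2} :=
    measurableSet_eq_fun hL1 hL2
  have herrMeas : Measurable fun q : Θ × (X × Label) => err q.1 q.2 := by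
    simp only [herr_def]
    exact Measurable.ite hset.compl measurable_const measurable_const
  have herr01 : ∀ θ p, err θ p = 0 ∨ err θ p = 1 := fun θ p => by
    by_cases h : F θ p.1 ≠ p.2 <;> simp [herr_def, h]
  refine le_trans
    (aux_main err herrMeas herr01 D P δ C hδ0 hδ1 hC m hm) (measure_mono ?_)
  intro S hSmem
  simp only [Set.mem_setOf_eq] at hSmem ⊢
  intro Q hQp hQP hKL
  haveI := hQp
  have hbound := hSmem Q hQp hQP hKL
  -- notation
  set q : Fin m → ℝ := fun i => ∫ θ, err θ (S i) ∂Q with hq_def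
  have herr_measθ : ∀ p, Measurable fun θ => err θ p := fun p =>
    herrMeas.comp (measurable_id.prodMk measurable_const)
  have herr_norm : ∀ θ p, ‖err θ p‖ ≤ 1 := fun θ p => by
    rcases herr01 θ p with h | h <;> rw [h] <;> norm_num
  have hIntErr : ∀ p, Integrable (fun θ => err θ p) Q := fun p =>
    integrable_of_bdd (herr_measθ p).aestronglyMeasurable (fun θ => herr_norm θ p)
  -- compute the double integral e_S
  have hinner1 : ∀ θ₁, (∫ θ₂, (m:ℝ)⁻¹ * ∑ i, err θ₁ (S i) * err θ₂ (S i) ∂Q)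
      = (m:ℝ)⁻¹ * ∑ i, err θ₁ (S i) * q i := by
    intro θ₁
    rw [integral_const_mul,
      integral_finset_sum _ (fun i _ => (hIntErr (S i)).const_mul (err θ₁ (S i)))]
    congr 1
    exact Finset.sum_congr rfl fun i _ => integral_const_mul _ _
  have hE1 : (∫ θ₁, ∫ θ₂, (m:ℝ)⁻¹ * ∑ i, err θ₁ (S i) * err θ₂ (S i) ∂Q ∂Q)
      = (m:ℝ)⁻¹ * ∑ i, q i * q i := by
    simp_rw [hinner1]
    rw [integral_const_mul,
      integral_finset_sum _ (fun i _ => (hIntErr (S i)).mul_const (q i))]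
    congr 1
    exact Finset.sum_congr rfl fun i _ => integral_mul_const _ _
  -- compute the double integral d_S
  have hpt : ∀ θ₁ θ₂ : Θ, ((m:ℝ)⁻¹ *
        ∑ i, (if F θ₁ (S i).1 ≠ F θ₂ (S i).1 then (1:ℝ) else 0))
      = (m:ℝ)⁻¹ * ∑ i, (err θ₁ (S i) + err θ₂ (S i)
          - 2 * (err θ₁ (S i) * err θ₂ (S i))) := by
    intro θ₁ θ₂
    congr 1
    exact Finset.sum_congr rfl fun i _ => ind_ne_eq (y := (S i).2)
  have hkey2 : ∀ (b : ℝ) (i : Fin m),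
      (∫ θ₂, (b + err θ₂ (S i) - 2 * (b * err θ₂ (S i))) ∂Q)
        = b + q i - 2 * (b * q i) := by
    intro b i
    rw [integral_sub (f := fun θ₂ => b + err θ₂ (S i))
        (g := fun θ₂ => 2 * (b * err θ₂ (S i)))
        ((integrable_const b).add (hIntErr (S i)))
        (((hIntErr (S i)).const_mul b).const_mul 2),
      integral_add (f := fun _ => b) (g := fun θ₂ => err θ₂ (S i))
        (integrable_const b) (hIntErr (S i)), integral_const,
      integral_const_mul, integral_const_mul]
    simp [hq_def]
  have hinner2 : ∀ θ₁, (∫ θ₂, (m:ℝ)⁻¹ * ∑ i, (err θ₁ (S i) + err θ₂ (S i)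
        - 2 * (err θ₁ (S i) * err θ₂ (S i))) ∂Q)
      = (m:ℝ)⁻¹ * ∑ i, (err θ₁ (S i) + q i - 2 * (err θ₁ (S i) * q i)) := by
    intro θ₁
    rw [integral_const_mul,
      integral_finset_sum (f := fun i θ₂ => err θ₁ (S i) + err θ₂ (S i)
          - 2 * (err θ₁ (S i) * err θ₂ (S i))) _ (fun i _ =>
        ((integrable_const (err θ₁ (S i))).add (hIntErr (S i))).sub
          (((hIntErr (S i)).const_mul (err θ₁ (S i))).const_mul 2))]
    congr 1
    exact Finset.sum_congr rfl fun i _ => hkey2 (err θ₁ (S i)) i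
  have hkey2' : ∀ i : Fin m,
      (∫ θ₁, (err θ₁ (S i) + q i - 2 * (err θ₁ (S i) * q i)) ∂Q)
        = q i + q i - 2 * (q i * q i) := by
    intro i
    rw [integral_sub (f := fun θ₁ => err θ₁ (S i) + q i)
        (g := fun θ₁ => 2 * (err θ₁ (S i) * q i))
        ((hIntErr (S i)).add (integrable_const (q i)))
        (((hIntErr (S i)).mul_const (q i)).const_mul 2),
      integral_add (f := fun θ₁ => err θ₁ (S i)) (g := fun _ => q i)
        (hIntErr (S i)) (integrable_const (q i)), integral_const,
      integral_const_mul, integral_mul_const]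
    simp [hq_def]
  have hE2 : (∫ θ₁, ∫ θ₂, (m:ℝ)⁻¹ *
        ∑ i, (if F θ₁ (S i).1 ≠ F θ₂ (S i).1 then (1:ℝ) else 0) ∂Q ∂Q)
      = (m:ℝ)⁻¹ * ∑ i, (q i + q i - 2 * (q i * q i)) := by
    simp_rw [hpt, hinner2]
    rw [integral_const_mul,
      integral_finset_sum (f := fun i θ₁ => err θ₁ (S i) + q i
          - 2 * (err θ₁ (S i) * q i)) _ (fun i _ =>
        ((hIntErr (S i)).add (integrable_const (q i))).sub
          (((hIntErr (S i)).mul_const (q i)).const_mul 2))]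
    congr 1
    exact Finset.sum_congr rfl fun i _ => hkey2' i
  have hsum : (∑ i, q i * q i) + (1/2) * ∑ i, (q i + q i - 2 * (q i * q i))
      = ∑ i, q i := by
    rw [Finset.mul_sum, ← Finset.sum_add_distrib]
    exact Finset.sum_congr rfl fun i _ => by ring
  have hE : (∫ θ₁, ∫ θ₂, (m:ℝ)⁻¹ * ∑ i, err θ₁ (S i) * err θ₂ (S i) ∂Q ∂Q)
      + (1/2) * (∫ θ₁, ∫ θ₂, (m:ℝ)⁻¹ *
        ∑ i, (if F θ₁ (S i).1 ≠ F θ₂ (S i).1 then (1:ℝ) else 0) ∂Q ∂Q)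
      = (m:ℝ)⁻¹ * ∑ i, q i := by
    rw [hE1, hE2, ← hsum]
    ring
  refine le_trans hbound (le_of_eq ?_)
  rw [← hE]
end

section
/- (Gaussian error probability of a stochastic linear classifier, Eq. (12)). Let d ≥ 1, u ∈ ℝ^d, φ ∈ ℝ^d with φ ≠ 0, and y ∈ {−1,+1}. Let w be distributed according to N(u, I) = ⊗_{i=1}^d gaussianReal(u_i, 1) on ℝ^d. Then the probability that sign(⟨w, φ⟩) ≠ y equals Φ( y·⟨u, φ⟩ / ‖φ‖ ), where sign(a) = +1 if a > 0 and sign(a) = −1 otherwise, and Φ(a) = ∫_a^∞ (1/√(2π))·e^{−x²/2} dx. -/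
open MeasureTheory ProbabilityTheory

/-- `sign(a) = +1` if `a > 0` and `sign(a) = -1` otherwise. -/
noncomputable def sgn (a : ℝ) : ℤ := if 0 < a then 1 else -1

/-- Standard Gaussian upper tail `Φ(a) = ∫_a^∞ (1/√(2π)) e^{-x²/2} dx`. -/
noncomputable def gaussTail (a : ℝ) : ℝ :=
  ∫ x in Set.Ioi a, (Real.sqrt (2 * Real.pi))⁻¹ * Real.exp (-x ^ 2 / 2)

open Real
open scoped NNReal ENNReal

section Aux

/-- Completing the square: product of two Gaussian densities. -/
lemma aux_pdf_mul (μ₁ μ₂ : ℝ) (v₁ v₂ : ℝ≥0) (h₁ : v₁ ≠ 0) (h₂ : v₂ ≠ 0) (z x : ℝ) :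
    gaussianPDFReal μ₁ v₁ x * gaussianPDFReal μ₂ v₂ (z - x)
      = gaussianPDFReal (μ₁ + μ₂) (v₁ + v₂) z *
        gaussianPDFReal (μ₁ + v₁ * (z - μ₁ - μ₂) / (v₁ + v₂)) (v₁ * v₂ / (v₁ + v₂)) x := by
  have ha : (0:ℝ) < v₁ := lt_of_le_of_ne v₁.coe_nonneg (by exact_mod_cast (Ne.symm h₁))
  have hb : (0:ℝ) < v₂ := lt_of_le_of_ne v₂.coe_nonneg (by exact_mod_cast (Ne.symm h₂))
  have hab : (0:ℝ) < (v₁:ℝ) + v₂ := by linarith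
  unfold gaussianPDFReal
  push_cast
  have key : ∀ (A B e f : ℝ), (A * rexp e) * (B * rexp f) = (A*B) * rexp (e+f) := by
    intros; rw [Real.exp_add]; ring
  rw [key, key]
  congr 1
  · rw [← mul_inv, ← mul_inv, ← Real.sqrt_mul (by positivity), ← Real.sqrt_mul (by positivity)]
    congr 1
    field_simp
  · congr 1
    field_simp
    ring

lemma aux_lintegral_pdf_conv (μ₁ μ₂ : ℝ) (v₁ v₂ : ℝ≥0) (h₁ : v₁ ≠ 0) (h₂ : v₂ ≠ 0) (z : ℝ) :
    ∫⁻ x, gaussianPDF μ₁ v₁ x * gaussianPDF μ₂ v₂ (z - x)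
      = gaussianPDF (μ₁ + μ₂) (v₁ + v₂) z := by
  have hw : v₁ * v₂ / (v₁ + v₂) ≠ 0 := by
    have : v₁ + v₂ ≠ 0 := by simp [h₁]
    positivity
  simp_rw [gaussianPDF]
  have : ∀ x : ℝ, ENNReal.ofReal (gaussianPDFReal μ₁ v₁ x) *
      ENNReal.ofReal (gaussianPDFReal μ₂ v₂ (z - x))
      = ENNReal.ofReal (gaussianPDFReal (μ₁ + μ₂) (v₁ + v₂) z)
        * ENNReal.ofReal (gaussianPDFReal (μ₁ + v₁ * (z - μ₁ - μ₂) / (v₁ + v₂))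
            (v₁ * v₂ / (v₁ + v₂)) x) := by
    intro x
    rw [← ENNReal.ofReal_mul (gaussianPDFReal_nonneg _ _ _),
      ← ENNReal.ofReal_mul (gaussianPDFReal_nonneg _ _ _), aux_pdf_mul μ₁ μ₂ v₁ v₂ h₁ h₂ z x]
  simp_rw [this]
  rw [lintegral_const_mul _ (measurable_gaussianPDFReal _ _).ennreal_ofReal]
  have := lintegral_gaussianPDFReal_eq_one (μ₁ + v₁ * (z - μ₁ - μ₂) / (v₁ + v₂)) hw
  rw [this, mul_one]

/-- Sum of independent Gaussians is Gaussian. -/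
lemma aux_gauss_conv (μ₁ μ₂ : ℝ) (v₁ v₂ : ℝ≥0) :
    Measure.map (fun p : ℝ × ℝ => p.1 + p.2)
      ((gaussianReal μ₁ v₁).prod (gaussianReal μ₂ v₂)) = gaussianReal (μ₁ + μ₂) (v₁ + v₂) := by
  by_cases h₂ : v₂ = 0
  · subst h₂
    rw [gaussianReal_zero_var, Measure.prod_dirac, Measure.map_map measurable_add
      measurable_prodMk_right]
    simpa [Function.comp_def] using gaussianReal_map_add_const (μ := μ₁) (v := v₁) μ₂
  by_cases h₁ : v₁ = 0
  · subst h₁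
    rw [gaussianReal_zero_var, Measure.dirac_prod, Measure.map_map measurable_add
      measurable_prodMk_left]
    have := gaussianReal_map_const_add (μ := μ₂) (v := v₂) μ₁
    simpa [add_comm, Function.comp_def] using this
  ext s hs
  rw [Measure.map_apply measurable_add hs, Measure.prod_apply (measurable_add hs)]
  have hpre : ∀ x : ℝ, (Prod.mk x ⁻¹' ((fun p : ℝ × ℝ => p.1 + p.2) ⁻¹' s))
      = (fun y => x + y) ⁻¹' s := fun x => rfl
  simp_rw [hpre]
  have hind : ∀ (x y : ℝ), ((fun y => x + y) ⁻¹' s).indicator (gaussianPDF μ₂ v₂) y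
      = s.indicator 1 (x + y) * gaussianPDF μ₂ v₂ y := by
    intro x y
    by_cases h : x + y ∈ s <;> simp [Set.indicator, h]
  have step1 : ∀ x : ℝ, gaussianReal μ₂ v₂ ((fun y => x + y) ⁻¹' s)
      = ∫⁻ z, s.indicator 1 z * gaussianPDF μ₂ v₂ (z - x) := by
    intro x
    rw [gaussianReal_apply _ h₂, ← lintegral_indicator (measurable_const_add x hs)]
    simp_rw [hind x]
    have := lintegral_add_left_eq_self (μ := (volume : Measure ℝ))
      (fun z => s.indicator 1 z * gaussianPDF μ₂ v₂ (z - x)) x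
    simp only [add_sub_cancel_left] at this
    exact this
  simp_rw [step1]
  rw [gaussianReal_of_var_ne_zero _ h₁,
    lintegral_withDensity_eq_lintegral_mul _ (measurable_gaussianPDF _ _)]
  swap
  · exact Measurable.lintegral_prod_right <| by
      exact ((measurable_one.indicator hs).comp measurable_snd).mul
        ((measurable_gaussianPDF μ₂ v₂).comp (measurable_snd.sub measurable_fst))
  simp only [Pi.mul_apply]
  have swap : ∫⁻ x, gaussianPDF μ₁ v₁ x * ∫⁻ z, s.indicator 1 z * gaussianPDF μ₂ v₂ (z - x)
      = ∫⁻ z, s.indicator 1 z * ∫⁻ x, gaussianPDF μ₁ v₁ x * gaussianPDF μ₂ v₂ (z - x) :=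
    calc ∫⁻ x, gaussianPDF μ₁ v₁ x * ∫⁻ z, s.indicator 1 z * gaussianPDF μ₂ v₂ (z - x)
        = ∫⁻ x, ∫⁻ z, gaussianPDF μ₁ v₁ x * (s.indicator 1 z * gaussianPDF μ₂ v₂ (z - x)) := by
          refine lintegral_congr fun x => ?_
          rw [lintegral_const_mul]
          exact (measurable_one.indicator hs).mul
            ((measurable_gaussianPDF μ₂ v₂).comp (measurable_id'.sub_const x))
      _ = ∫⁻ z, ∫⁻ x, gaussianPDF μ₁ v₁ x * (s.indicator 1 z * gaussianPDF μ₂ v₂ (z - x)) := by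
          refine lintegral_lintegral_swap (Measurable.aemeasurable ?_)
          exact ((measurable_gaussianPDF μ₁ v₁).comp measurable_fst).mul
            (((measurable_one.indicator hs).comp measurable_snd).mul
              ((measurable_gaussianPDF μ₂ v₂).comp (measurable_snd.sub measurable_fst)))
      _ = ∫⁻ z, s.indicator 1 z * ∫⁻ x, gaussianPDF μ₁ v₁ x * gaussianPDF μ₂ v₂ (z - x) := by
          refine lintegral_congr fun z => ?_
          rw [← lintegral_const_mul]
          · exact lintegral_congr fun x => by ring
          · exact (measurable_gaussianPDF μ₁ v₁).mul
              ((measurable_gaussianPDF μ₂ v₂).comp (measurable_const.sub measurable_id'))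
  rw [swap]
  simp_rw [aux_lintegral_pdf_conv μ₁ μ₂ v₁ v₂ h₁ h₂]
  have hsum : v₁ + v₂ ≠ 0 := by simp [h₁]
  rw [gaussianReal_apply _ hsum, ← lintegral_indicator hs]
  refine lintegral_congr fun z => ?_
  by_cases h : z ∈ s <;> simp [Set.indicator, h]

/-- The law of `⟨w, φ⟩` under the product Gaussian measure. -/
lemma aux_map_pi_sum (n : ℕ) (u φ : Fin n → ℝ) :
    Measure.map (fun w : Fin n → ℝ => ∑ i, w i * φ i)
      (Measure.pi fun i => gaussianReal (u i) 1)
    = gaussianReal (∑ i, u i * φ i) (∑ i, (⟨φ i ^ 2, sq_nonneg _⟩ : ℝ≥0)) := by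
  induction n with
  | zero =>
      simp only [Finset.univ_eq_empty, Finset.sum_empty]
      rw [show (fun w : Fin 0 → ℝ => (0:ℝ)) = fun _ => 0 from rfl, Measure.map_const]
      simp
      exact (gaussianReal_zero_var 0).symm
  | succ n ih =>
      have hmp := measurePreserving_piFinSuccAbove
        (fun i : Fin (n+1) => gaussianReal (u i) 1) 0
      set e := MeasurableEquiv.piFinSuccAbove (fun _ : Fin (n+1) => ℝ) 0 with he
      have hg : Measurable (fun ws : Fin n → ℝ => ∑ j, ws j * φ j.succ) := by
        exact Finset.measurable_sum _ fun j _ => (measurable_pi_apply j).mul_const _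
      have hT : Measurable (fun p : ℝ × (Fin n → ℝ) => p.1 * φ 0 + ∑ j, p.2 j * φ j.succ) :=
        (measurable_fst.mul_const _).add (hg.comp measurable_snd)
      have hS : (fun w : Fin (n+1) → ℝ => ∑ i, w i * φ i)
          = (fun p : ℝ × (Fin n → ℝ) => p.1 * φ 0 + ∑ j, p.2 j * φ j.succ) ∘ e := by
        funext w
        simp [e, MeasurableEquiv.piFinSuccAbove, Fin.sum_univ_succ, Fin.zero_succAbove, Fin.tail]
      rw [hS, ← Measure.map_map hT e.measurable, hmp.map_eq]
      have hT' : (fun p : ℝ × (Fin n → ℝ) => p.1 * φ 0 + ∑ j, p.2 j * φ j.succ)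
          = (fun q : ℝ × ℝ => q.1 + q.2) ∘
            Prod.map (fun x : ℝ => x * φ 0) (fun ws : Fin n → ℝ => ∑ j, ws j * φ j.succ) := rfl
      rw [hT', ← Measure.map_map measurable_add
        (Measurable.prodMap (measurable_mul_const (φ 0)) hg)]
      have htail : (Measure.pi fun j : Fin n =>
            gaussianReal (u ((0 : Fin (n+1)).succAbove j)) 1)
          = Measure.pi fun j : Fin n => gaussianReal (u j.succ) 1 := by
        simp [Fin.zero_succAbove]
      have hprodmap : Measure.map
            (Prod.map (fun x : ℝ => x * φ 0) (fun ws : Fin n → ℝ => ∑ j, ws j * φ j.succ))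
            ((gaussianReal (u 0) 1).prod
              (Measure.pi fun j : Fin n => gaussianReal (u ((0 : Fin (n+1)).succAbove j)) 1))
          = (gaussianReal (φ 0 * u 0) (⟨φ 0 ^ 2, sq_nonneg _⟩ * 1)).prod
              (gaussianReal (∑ j : Fin n, u j.succ * φ j.succ)
                (∑ j : Fin n, (⟨φ j.succ ^ 2, sq_nonneg _⟩ : ℝ≥0))) := by
        rw [htail, ← Measure.map_prod_map _ _ (measurable_mul_const _) hg, gaussianReal_map_mul_const,
          ih (fun j => u j.succ) (fun j => φ j.succ)]
        rfl
      rw [hprodmap, aux_gauss_conv]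
      congr 1
      · rw [Fin.sum_univ_succ]; ring
      · refine NNReal.coe_injective ?_
        exact congrArg Subtype.val ((congrArg (· + ∑ j : Fin n, (⟨φ j.succ ^ 2, sq_nonneg _⟩ : ℝ≥0))
          (mul_one (⟨φ 0 ^ 2, sq_nonneg _⟩ : ℝ≥0))).trans
          (Fin.sum_univ_succ (fun i => (⟨φ i ^ 2, sq_nonneg _⟩ : ℝ≥0))).symm)

lemma aux_std_pdf (x : ℝ) :
    gaussianPDFReal 0 1 x = (Real.sqrt (2 * Real.pi))⁻¹ * Real.exp (-x ^ 2 / 2) := by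
  simp [gaussianPDFReal]

lemma aux_std_toReal (s : Set ℝ) (hs : MeasurableSet s) :
    (gaussianReal 0 1 s).toReal = ∫ x in s, gaussianPDFReal 0 1 x := by
  rw [gaussianReal_apply_eq_integral 0 one_ne_zero s, ENNReal.toReal_ofReal]
  exact setIntegral_nonneg hs fun x _ => gaussianPDFReal_nonneg _ _ _

lemma aux_std_Iic (c : ℝ) : (gaussianReal 0 1 (Set.Iic c)).toReal = gaussTail (-c) := by
  rw [aux_std_toReal _ measurableSet_Iic]
  have : ∀ x : ℝ, gaussianPDFReal 0 1 x = gaussianPDFReal 0 1 (-x) := by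
    intro x; simp [gaussianPDFReal, neg_sq]
  calc ∫ x in Set.Iic c, gaussianPDFReal 0 1 x
      = ∫ x in Set.Iic c, gaussianPDFReal 0 1 (-x) := by
        exact setIntegral_congr_fun measurableSet_Iic fun x _ => this x
    _ = ∫ x in Set.Ioi (-c), gaussianPDFReal 0 1 x := integral_comp_neg_Iic c _
    _ = gaussTail (-c) := by
        unfold gaussTail
        exact setIntegral_congr_fun measurableSet_Ioi fun x _ => aux_std_pdf x

lemma aux_std_Ioi (c : ℝ) : (gaussianReal 0 1 (Set.Ioi c)).toReal = gaussTail c := by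
  rw [aux_std_toReal _ measurableSet_Ioi]
  unfold gaussTail
  exact setIntegral_congr_fun measurableSet_Ioi fun x _ => aux_std_pdf x

lemma aux_gauss_affine (m : ℝ) (v : ℝ≥0) :
    gaussianReal m v
      = Measure.map (fun x => Real.sqrt v * x + m) (gaussianReal 0 1) := by
  have h1 : (fun x : ℝ => Real.sqrt v * x + m)
      = (fun x => x + m) ∘ (fun x : ℝ => Real.sqrt v * x) := rfl
  rw [h1, ← Measure.map_map (measurable_add_const m) (measurable_const_mul _),
    gaussianReal_map_const_mul, gaussianReal_map_add_const]
  congr 1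
  · simp
  · rw [mul_one]
    ext
    simp [Real.sq_sqrt v.coe_nonneg]

lemma aux_gauss_Iic (m : ℝ) (v : ℝ≥0) (hv : v ≠ 0) :
    (gaussianReal m v (Set.Iic 0)).toReal = gaussTail (m / Real.sqrt v) := by
  have hs : (0:ℝ) < Real.sqrt v := Real.sqrt_pos.mpr
    (lt_of_le_of_ne v.coe_nonneg (by exact_mod_cast Ne.symm hv))
  rw [aux_gauss_affine m v, Measure.map_apply (by fun_prop) measurableSet_Iic]
  have : (fun x : ℝ => Real.sqrt v * x + m) ⁻¹' Set.Iic 0 = Set.Iic (-(m / Real.sqrt v)) := by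
    ext x
    simp only [Set.mem_preimage, Set.mem_Iic]
    rw [show -(m / Real.sqrt v) = (-m) / Real.sqrt v by ring, le_div_iff₀ hs]
    constructor <;> intro h <;> [skip; skip] <;> linarith [mul_comm x (Real.sqrt (v:ℝ))]
  rw [this, aux_std_Iic, neg_neg]

lemma aux_gauss_Ioi (m : ℝ) (v : ℝ≥0) (hv : v ≠ 0) :
    (gaussianReal m v (Set.Ioi 0)).toReal = gaussTail (-(m / Real.sqrt v)) := by
  have hs : (0:ℝ) < Real.sqrt v := Real.sqrt_pos.mpr
    (lt_of_le_of_ne v.coe_nonneg (by exact_mod_cast Ne.symm hv))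
  rw [aux_gauss_affine m v, Measure.map_apply (by fun_prop) measurableSet_Ioi]
  have : (fun x : ℝ => Real.sqrt v * x + m) ⁻¹' Set.Ioi 0 = Set.Ioi (-(m / Real.sqrt v)) := by
    ext x
    simp only [Set.mem_preimage, Set.mem_Ioi]
    rw [show -(m / Real.sqrt v) = (-m) / Real.sqrt v by ring, div_lt_iff₀ hs]
    constructor <;> intro h <;> [skip; skip] <;> linarith [mul_comm x (Real.sqrt (v:ℝ))]
  rw [this, aux_std_Ioi]

end Aux

/-- **Gaussian error probability of a stochastic linear classifier (Eq. (12)).**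
For `w ∼ N(u, I)`, `Pr[sign(⟨w, φ⟩) ≠ y] = Φ(y ⟨u, φ⟩ / ‖φ‖)`. -/
theorem gaussian_linear_classifier_error (d : ℕ) (hd : 1 ≤ d)
    (u φ : Fin d → ℝ) (hφ : φ ≠ 0) (y : ℤ) (hy : y = 1 ∨ y = -1) :
    ((Measure.pi fun i : Fin d => gaussianReal (u i) 1)
        {w : Fin d → ℝ | sgn (∑ i, w i * φ i) ≠ y}).toReal =
      gaussTail ((y : ℝ) * (∑ i, u i * φ i) / Real.sqrt (∑ i, φ i ^ 2)) := by
  have hS : Measurable (fun w : Fin d → ℝ => ∑ i, w i * φ i) :=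
    Finset.measurable_sum _ fun i _ => (measurable_pi_apply i).mul_const _
  set v : ℝ≥0 := ∑ i, (⟨φ i ^ 2, sq_nonneg _⟩ : ℝ≥0) with hvdef
  have hvc : (v:ℝ) = ∑ i, φ i ^ 2 := by
    rw [hvdef]
    exact NNReal.coe_sum (s := Finset.univ) (f := fun i => (⟨φ i ^ 2, sq_nonneg _⟩ : ℝ≥0))
  have hvne : v ≠ 0 := by
    obtain ⟨i, hi⟩ : ∃ i, φ i ≠ 0 := by
      by_contra h; push_neg at h; exact hφ (funext h)
    intro h
    have h0 : (v:ℝ) = 0 := by rw [h]; simp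
    rw [hvc] at h0
    have hle : φ i ^ 2 ≤ ∑ j, φ j ^ 2 :=
      Finset.single_le_sum (fun j _ => sq_nonneg (φ j)) (Finset.mem_univ i)
    nlinarith [sq_nonneg (φ i), pow_pos (abs_pos.mpr hi) 2, sq_abs (φ i)]
  have hsqrt : Real.sqrt (∑ i, φ i ^ 2) = Real.sqrt v := by rw [hvc]
  rcases hy with rfl | rfl
  · have hset : {w : Fin d → ℝ | sgn (∑ i, w i * φ i) ≠ (1:ℤ)}
        = (fun w : Fin d → ℝ => ∑ i, w i * φ i) ⁻¹' Set.Iic 0 := by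
      ext w
      simp only [Set.mem_setOf_eq, Set.mem_preimage, Set.mem_Iic, sgn]
      by_cases h : 0 < ∑ i, w i * φ i <;> simp [h] <;> linarith
    rw [hset, ← Measure.map_apply hS measurableSet_Iic, aux_map_pi_sum d u φ,
      aux_gauss_Iic _ _ hvne]
    rw [hsqrt]
    norm_num
  · have hset : {w : Fin d → ℝ | sgn (∑ i, w i * φ i) ≠ (-1:ℤ)}
        = (fun w : Fin d → ℝ => ∑ i, w i * φ i) ⁻¹' Set.Ioi 0 := by
      ext w
      simp only [Set.mem_setOf_eq, Set.mem_preimage, Set.mem_Ioi, sgn]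
      by_cases h : 0 < ∑ i, w i * φ i <;> simp [h]
    rw [hset, ← Measure.map_apply hS measurableSet_Ioi, aux_map_pi_sum d u φ,
      aux_gauss_Ioi _ _ hvne]
    rw [hsqrt]
    push_cast
    congr 1
    ring
end

section
/- (Disagreement probability of two independent Gaussian linear classifiers, Eq. (13)). Let d ≥ 1, u ∈ ℝ^d, and φ ∈ ℝ^d with φ ≠ 0. Let w1 and w2 be independent, each distributed according to N(u, I) = ⊗_{i=1}^d gaussianReal(u_i, 1) on ℝ^d. Then the probability that sign(⟨w1, φ⟩) ≠ sign(⟨w2, φ⟩) equals 2·Φ( ⟨u, φ⟩/‖φ‖ )·Φ( −⟨u, φ⟩/‖φ‖ ), where sign(a) = +1 if a > 0 and sign(a) = −1 otherwise. -/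
open MeasureTheory ProbabilityTheory Real
open scoped NNReal ENNReal

lemma gauss_conv_real (m₁ m₂ : ℝ) {v₁ v₂ : ℝ≥0} (h₁ : v₁ ≠ 0) (h₂ : v₂ ≠ 0) (t : ℝ) :
    ∫ x, gaussianPDFReal m₁ v₁ x * gaussianPDFReal m₂ v₂ (t - x) =
      gaussianPDFReal (m₁ + m₂) (v₁ + v₂) t := by
  have hv₁ : (0:ℝ) < v₁ := lt_of_le_of_ne v₁.coe_nonneg (by exact_mod_cast (Ne.symm h₁))
  have hv₂ : (0:ℝ) < v₂ := lt_of_le_of_ne v₂.coe_nonneg (by exact_mod_cast (Ne.symm h₂))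
  have hs : (0:ℝ) < v₁ + v₂ := by positivity
  set a : ℝ := (v₁ + v₂) / (2 * v₁ * v₂) with ha_def
  have ha : 0 < a := by positivity
  set c : ℝ := (m₁ * v₂ + (t - m₂) * v₁) / (v₁ + v₂) with hc_def
  have key : ∀ x : ℝ,
      (-(x - m₁)^2 / (2 * v₁)) + (-(t - x - m₂)^2 / (2 * v₂)) =
        -a * (x - c)^2 + (-(t - (m₁ + m₂))^2 / (2 * (v₁ + v₂))) := by
    intro x
    rw [ha_def, hc_def]
    field_simp
    ring
  have hexp : ∀ x : ℝ,
      gaussianPDFReal m₁ v₁ x * gaussianPDFReal m₂ v₂ (t - x) =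
        ((√(2 * π * v₁))⁻¹ * (√(2 * π * v₂))⁻¹ *
          rexp (-(t - (m₁ + m₂))^2 / (2 * (v₁ + v₂)))) * rexp (-a * (x - c)^2) := by
    intro x
    simp only [gaussianPDFReal]
    rw [show t - x - m₂ = t - x - m₂ by ring]
    rw [mul_mul_mul_comm, ← Real.exp_add, key x, Real.exp_add]
    ring
  rw [integral_congr_ae (Filter.Eventually.of_forall hexp), integral_const_mul]
  have : ∫ x : ℝ, rexp (-a * (x - c)^2) = √(π / a) := by
    rw [← integral_gaussian a]
    exact integral_sub_right_eq_self (μ := volume) (fun x => rexp (-a * x ^ 2)) c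
  rw [this, gaussianPDFReal]
  have hconst : (√(2 * π * v₁))⁻¹ * (√(2 * π * v₂))⁻¹ * √(π / a) =
      (√(2 * π * (v₁ + v₂)))⁻¹ := by
    rw [← Real.sqrt_inv, ← Real.sqrt_inv, ← Real.sqrt_inv, ← Real.sqrt_mul (by positivity),
      ← Real.sqrt_mul (by positivity)]
    congr 1
    rw [ha_def]
    field_simp
  push_cast
  rw [← hconst]
  ring

lemma gaussianPDFReal_le (m : ℝ) (v : ℝ≥0) (x : ℝ) :
    gaussianPDFReal m v x ≤ (√(2 * π * v))⁻¹ := by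
  rw [gaussianPDFReal]
  have h1 : rexp (-(x - m) ^ 2 / (2 * v)) ≤ 1 := by
    rw [Real.exp_le_one_iff]
    by_cases hv : (v:ℝ) = 0
    · simp [hv]
    · apply div_nonpos_of_nonpos_of_nonneg (neg_nonpos.mpr (sq_nonneg _))
      positivity
  calc (√(2 * π * v))⁻¹ * rexp (-(x - m) ^ 2 / (2 * v)) ≤ (√(2 * π * v))⁻¹ * 1 :=
        mul_le_mul_of_nonneg_left h1 (by positivity)
    _ = _ := mul_one _

lemma gaussianReal_conv (m₁ m₂ : ℝ) (v₁ v₂ : ℝ≥0) :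
    ((gaussianReal m₁ v₁).prod (gaussianReal m₂ v₂)).map (fun p : ℝ × ℝ => p.1 + p.2) =
      gaussianReal (m₁ + m₂) (v₁ + v₂) := by
  by_cases h₁ : v₁ = 0
  · subst h₁
    rw [gaussianReal_zero_var, Measure.dirac_prod,
      Measure.map_map measurable_add measurable_prodMk_left]
    have := gaussianReal_map_const_add (μ := m₂) (v := v₂) m₁
    simpa [add_comm, Function.comp_def] using this
  by_cases h₂ : v₂ = 0
  · subst h₂
    rw [gaussianReal_zero_var, Measure.prod_dirac,
      Measure.map_map measurable_add measurable_prodMk_right]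
    have := gaussianReal_map_add_const (μ := m₁) (v := v₁) m₂
    simpa [Function.comp_def] using this
  have hsum : v₁ + v₂ ≠ 0 := fun h => h₁ (add_eq_zero.mp h).1
  ext s hs
  rw [Measure.map_apply measurable_add hs,
    Measure.prod_apply (measurable_add hs)]
  have hslice : ∀ x : ℝ,
      gaussianReal m₂ v₂ (Prod.mk x ⁻¹' ((fun p : ℝ × ℝ => p.1 + p.2) ⁻¹' s)) =
        ∫⁻ t in s, ENNReal.ofReal (gaussianPDFReal m₂ v₂ (t - x)) := by
    intro x
    have hpre : Prod.mk x ⁻¹' ((fun p : ℝ × ℝ => p.1 + p.2) ⁻¹' s) = (· + x) ⁻¹' s := by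
      ext y; simp [add_comm]
    rw [hpre, gaussianReal_of_var_ne_zero _ h₂,
      withDensity_apply _ ((measurable_add_const x) hs)]
    have := (measurePreserving_add_right (volume : Measure ℝ) x).setLIntegral_comp_preimage_emb
      (measurableEmbedding_addRight x) (fun t => ENNReal.ofReal (gaussianPDFReal m₂ v₂ (t - x))) s
    simp only [add_sub_cancel_right] at this
    rw [← this]
    rfl
  simp_rw [hslice]
  rw [gaussianReal_of_var_ne_zero _ h₁,
    lintegral_withDensity_eq_lintegral_mul _ (measurable_gaussianPDF _ _)
      (by
        apply Measurable.lintegral_prod_right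
        exact ((measurable_gaussianPDFReal m₂ v₂).comp (measurable_snd.sub measurable_fst)).ennreal_ofReal)]
  have hmul : ∀ x : ℝ, (gaussianPDF m₁ v₁ * fun x => ∫⁻ t in s, ENNReal.ofReal (gaussianPDFReal m₂ v₂ (t - x))) x
      = ∫⁻ t in s, ENNReal.ofReal (gaussianPDFReal m₁ v₁ x) * ENNReal.ofReal (gaussianPDFReal m₂ v₂ (t - x)) := by
    intro x
    simp only [Pi.mul_apply, gaussianPDF]
    have hm : Measurable fun t : ℝ => ENNReal.ofReal (gaussianPDFReal m₂ v₂ (t - x)) :=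
      ((measurable_gaussianPDFReal m₂ v₂).comp (measurable_id.sub_const x)).ennreal_ofReal
    exact (lintegral_const_mul _ hm).symm
  simp_rw [hmul]
  rw [lintegral_lintegral_swap
    (((measurable_gaussianPDFReal m₁ v₁).comp measurable_fst).ennreal_ofReal.mul
      (((measurable_gaussianPDFReal m₂ v₂).comp (measurable_snd.sub measurable_fst)).ennreal_ofReal)).aemeasurable]
  have hinner : ∀ t : ℝ,
      ∫⁻ x, ENNReal.ofReal (gaussianPDFReal m₁ v₁ x) * ENNReal.ofReal (gaussianPDFReal m₂ v₂ (t - x)) =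
        ENNReal.ofReal (gaussianPDFReal (m₁ + m₂) (v₁ + v₂) t) := by
    intro t
    have hint : Integrable (fun x => gaussianPDFReal m₁ v₁ x * gaussianPDFReal m₂ v₂ (t - x)) := by
      refine Integrable.bdd_mul (c := (√(2 * π * v₁))⁻¹)
        ((integrable_gaussianPDFReal m₂ v₂).comp_sub_left t)
        (measurable_gaussianPDFReal m₁ v₁).aestronglyMeasurable ?_
      refine Filter.Eventually.of_forall fun x => ?_
      rw [Real.norm_eq_abs, abs_of_nonneg (gaussianPDFReal_nonneg _ _ _)]
      exact gaussianPDFReal_le _ _ _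
    have hpt : ∀ x : ℝ, ENNReal.ofReal (gaussianPDFReal m₁ v₁ x) * ENNReal.ofReal (gaussianPDFReal m₂ v₂ (t - x))
        = ENNReal.ofReal (gaussianPDFReal m₁ v₁ x * gaussianPDFReal m₂ v₂ (t - x)) := fun x =>
      (ENNReal.ofReal_mul (gaussianPDFReal_nonneg _ _ _)).symm
    simp_rw [hpt]
    rw [← ofReal_integral_eq_lintegral_ofReal hint
        (Filter.Eventually.of_forall fun x =>
          mul_nonneg (gaussianPDFReal_nonneg _ _ _) (gaussianPDFReal_nonneg _ _ _)),
      gauss_conv_real m₁ m₂ h₁ h₂ t]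
  simp_rw [hinner]
  rw [gaussianReal_of_var_ne_zero _ hsum, withDensity_apply _ hs]
  rfl

lemma pi_gauss_map_sum : ∀ (n : ℕ) (u c : Fin n → ℝ),
    (Measure.pi fun i => gaussianReal (u i) 1).map (fun w => ∑ i, w i * c i) =
      gaussianReal (∑ i, u i * c i) (∑ i, (⟨c i ^ 2, sq_nonneg _⟩ : ℝ≥0)) := by
  intro n
  induction n with
  | zero =>
    intro u c
    rw [show (fun w : Fin 0 → ℝ => ∑ i, w i * c i) = fun _ => (0:ℝ) from
      funext fun w => by simp]
    rw [Measure.map_const, measure_univ, one_smul]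
    simp
    exact (gaussianReal_zero_var 0).symm
  | succ n ih =>
    intro u c
    have hmp := measurePreserving_piFinSuccAbove (fun i : Fin (n+1) => gaussianReal (u i) 1) 0
    set e := MeasurableEquiv.piFinSuccAbove (fun _ : Fin (n+1) => ℝ) 0 with he_def
    have hg : Measurable (fun p : ℝ × (Fin n → ℝ) => p.1 * c 0 + ∑ j, p.2 j * c j.succ) := by
      apply Measurable.add
      · exact measurable_fst.mul_const _
      · exact Finset.measurable_sum _ fun j _ =>
          ((measurable_pi_apply j).comp measurable_snd).mul_const _
    have hfe : (fun w : Fin (n+1) → ℝ => ∑ i, w i * c i) =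
        (fun p : ℝ × (Fin n → ℝ) => p.1 * c 0 + ∑ j, p.2 j * c j.succ) ∘ e := by
      funext w
      simp only [Function.comp_apply, he_def, MeasurableEquiv.piFinSuccAbove_apply]
      rw [Fin.sum_univ_succ]
      congr 1
    rw [hfe, ← Measure.map_map hg e.measurable, hmp.map_eq]
    have h2 : (fun p : ℝ × (Fin n → ℝ) => p.1 * c 0 + ∑ j, p.2 j * c j.succ)
        = (fun q : ℝ × ℝ => q.1 + q.2) ∘
          (Prod.map (fun x : ℝ => x * c 0) (fun y : Fin n → ℝ => ∑ j, y j * c j.succ)) := rfl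
    have hm2 : Measurable (fun y : Fin n → ℝ => ∑ j, y j * c j.succ) :=
      Finset.measurable_sum _ fun j _ => (measurable_pi_apply j).mul_const _
    rw [h2, ← Measure.map_map measurable_add (Measurable.prodMap (measurable_mul_const _) hm2),
      ← Measure.map_prod_map _ _ (measurable_mul_const _) hm2]
    have hpi : (Measure.pi fun j : Fin n => gaussianReal (u ((0 : Fin (n+1)).succAbove j)) 1)
        = Measure.pi fun j : Fin n => gaussianReal (u j.succ) 1 := by
      congr 1
    rw [hpi, gaussianReal_map_mul_const (c 0), ih (fun j => u j.succ) (fun j => c j.succ),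
      gaussianReal_conv]
    congr 1
    · rw [Fin.sum_univ_succ]
      ring
    · rw [mul_one]
      exact (Fin.sum_univ_succ (f := fun i => (⟨c i ^ 2, sq_nonneg _⟩ : ℝ≥0))).symm

lemma gaussTail_nonneg (a : ℝ) : 0 ≤ gaussTail a :=
  setIntegral_nonneg measurableSet_Ioi (fun x _ => by positivity)

lemma std_Ioi (a : ℝ) :
    gaussianReal 0 1 (Set.Ioi a) = ENNReal.ofReal (gaussTail a) := by
  rw [gaussianReal_apply_eq_integral 0 one_ne_zero]
  congr 1
  refine setIntegral_congr_fun measurableSet_Ioi fun x _ => ?_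
  simp only [gaussianPDFReal, NNReal.coe_one, mul_one, sub_zero]

lemma std_Ici (a : ℝ) :
    gaussianReal 0 1 (Set.Ici a) = gaussianReal 0 1 (Set.Ioi a) := by
  refine le_antisymm ?_ (measure_mono Set.Ioi_subset_Ici_self)
  have h0 : gaussianReal 0 1 ({a} : Set ℝ) = 0 :=
    gaussianReal_absolutelyContinuous 0 one_ne_zero (measure_singleton a)
  calc gaussianReal 0 1 (Set.Ici a) = gaussianReal 0 1 (Set.Ioi a ∪ {a}) := by
        rw [Set.Ioi_union_left]
    _ ≤ gaussianReal 0 1 (Set.Ioi a) + gaussianReal 0 1 {a} := measure_union_le _ _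
    _ = gaussianReal 0 1 (Set.Ioi a) := by rw [h0, add_zero]

lemma std_Iic (a : ℝ) :
    gaussianReal 0 1 (Set.Iic a) = ENNReal.ofReal (gaussTail (-a)) := by
  have hneg : gaussianReal 0 1 = (gaussianReal 0 1).map (fun x : ℝ => x * (-1)) := by
    rw [gaussianReal_map_mul_const (-1)]
    congr 1
    · ring
    · ext; norm_num
  conv_lhs => rw [hneg]
  rw [Measure.map_apply (measurable_mul_const _) measurableSet_Iic]
  have : (fun x : ℝ => x * (-1)) ⁻¹' Set.Iic a = Set.Ici (-a) := by
    ext x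
    simp only [Set.mem_preimage, Set.mem_Iic, Set.mem_Ici]
    constructor <;> intro h <;> linarith
  rw [this, std_Ici, std_Ioi]

/-- **Disagreement probability of two independent Gaussian linear classifiers (Eq. (13)).**
For independent `w₁, w₂ ∼ N(u, I)`,
`Pr[sign(⟨w₁, φ⟩) ≠ sign(⟨w₂, φ⟩)] = 2 Φ(⟨u,φ⟩/‖φ‖) Φ(-⟨u,φ⟩/‖φ‖)`. -/
theorem gaussian_linear_classifiers_disagreement (d : ℕ) (hd : 1 ≤ d)
    (u φ : Fin d → ℝ) (hφ : φ ≠ 0) :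
    (((Measure.pi fun i : Fin d => gaussianReal (u i) 1).prod
        (Measure.pi fun i : Fin d => gaussianReal (u i) 1))
        {w : (Fin d → ℝ) × (Fin d → ℝ) |
          sgn (∑ i, w.1 i * φ i) ≠ sgn (∑ i, w.2 i * φ i)}).toReal =
      2 * gaussTail ((∑ i, u i * φ i) / Real.sqrt (∑ i, φ i ^ 2)) *
        gaussTail (-((∑ i, u i * φ i) / Real.sqrt (∑ i, φ i ^ 2))) := by
  classical
  set m : ℝ := ∑ i, u i * φ i with hm_def
  set σ : ℝ := Real.sqrt (∑ i, φ i ^ 2) with hσ_def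
  set μd : Measure (Fin d → ℝ) := Measure.pi fun i : Fin d => gaussianReal (u i) 1 with hμd
  have hσsq : 0 < ∑ i, φ i ^ 2 := by
    obtain ⟨i, hi⟩ : ∃ i, φ i ≠ 0 := by
      by_contra h
      push_neg at h
      exact hφ (funext h)
    exact Finset.sum_pos' (fun j _ => sq_nonneg _) ⟨i, Finset.mem_univ i, by positivity⟩
  have hσ : 0 < σ := Real.sqrt_pos.mpr hσsq
  set V : ℝ≥0 := ∑ i, (⟨φ i ^ 2, sq_nonneg _⟩ : ℝ≥0) with hV
  have hVcoe : (V : ℝ) = ∑ i, φ i ^ 2 := by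
    rw [hV]
    exact (NNReal.coe_sum (s := Finset.univ) (f := fun i => (⟨φ i ^ 2, sq_nonneg _⟩ : ℝ≥0))).trans (Finset.sum_congr rfl fun i _ => rfl)
  have hf : Measurable fun w : Fin d → ℝ => ∑ i, w i * φ i :=
    Finset.measurable_sum _ fun i _ => (measurable_pi_apply i).mul_const _
  have hmap : μd.map (fun w => ∑ i, w i * φ i) = gaussianReal m V := pi_gauss_map_sum d u φ
  have hrep : gaussianReal m V = (gaussianReal 0 1).map (fun x => σ * x + m) := by
    have : (fun x : ℝ => σ * x + m) = (· + m) ∘ (σ * ·) := rfl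
    rw [this, ← Measure.map_map (measurable_add_const m) (measurable_const_mul σ),
      gaussianReal_map_const_mul σ, gaussianReal_map_add_const]
    congr 1
    · simp
    · ext
      push_cast
      rw [mul_one, hVcoe, Real.sq_sqrt hσsq.le]
  have hmeas_aff : Measurable fun x : ℝ => σ * x + m := (measurable_const_mul σ).add_const m
  have hpre1 : (fun x : ℝ => σ * x + m) ⁻¹' Set.Ioi 0 = Set.Ioi (-(m / σ)) := by
    ext x
    simp only [Set.mem_preimage, Set.mem_Ioi]
    rw [show -(m / σ) = (-m) / σ by ring, div_lt_iff₀ hσ, mul_comm]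
    constructor <;> intro h <;> linarith
  have hpre2 : (fun x : ℝ => σ * x + m) ⁻¹' Set.Iic 0 = Set.Iic (-(m / σ)) := by
    ext x
    simp only [Set.mem_preimage, Set.mem_Iic]
    rw [show -(m / σ) = (-m) / σ by ring, le_div_iff₀ hσ, mul_comm]
    constructor <;> intro h <;> linarith
  set A : Set (Fin d → ℝ) := {w | 0 < ∑ i, w i * φ i} with hA
  set B : Set (Fin d → ℝ) := {w | ¬ 0 < ∑ i, w i * φ i} with hB
  have hAmeas : MeasurableSet A := hf measurableSet_Ioi
  have hBmeas : MeasurableSet B := hAmeas.compl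
  have hμA : μd A = ENNReal.ofReal (gaussTail (-(m / σ))) := by
    have : μd A = μd.map (fun w => ∑ i, w i * φ i) (Set.Ioi 0) := by
      rw [Measure.map_apply hf measurableSet_Ioi]
      rfl
    rw [this, hmap, hrep, Measure.map_apply hmeas_aff measurableSet_Ioi, hpre1, std_Ioi]
  have hμB : μd B = ENNReal.ofReal (gaussTail (m / σ)) := by
    have : μd B = μd.map (fun w => ∑ i, w i * φ i) (Set.Iic 0) := by
      rw [Measure.map_apply hf measurableSet_Iic]
      congr 1
      ext w
      simp [hB, not_lt]
    rw [this, hmap, hrep, Measure.map_apply hmeas_aff measurableSet_Iic, hpre2, std_Iic,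
      neg_neg]
  have hset : {w : (Fin d → ℝ) × (Fin d → ℝ) |
      sgn (∑ i, w.1 i * φ i) ≠ sgn (∑ i, w.2 i * φ i)} = (A ×ˢ B) ∪ (B ×ˢ A) := by
    ext ⟨w₁, w₂⟩
    simp only [Set.mem_setOf_eq, Set.mem_union, Set.mem_prod, sgn, hA, hB]
    by_cases h1 : 0 < ∑ i, w₁ i * φ i <;> by_cases h2 : 0 < ∑ i, w₂ i * φ i <;>
      simp [h1, h2]
  have hdisj : Disjoint (A ×ˢ B) (B ×ˢ A) := by
    rw [Set.disjoint_left]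
    rintro ⟨w₁, w₂⟩ ⟨h1, _⟩ ⟨h1', _⟩
    exact h1' h1
  rw [hset, measure_union hdisj (hBmeas.prod hAmeas), Measure.prod_prod, Measure.prod_prod,
    hμA, hμB]
  have h1 := gaussTail_nonneg (-(m / σ))
  have h2 := gaussTail_nonneg (m / σ)
  rw [← ENNReal.ofReal_mul h1, ← ENNReal.ofReal_mul h2,
    ← ENNReal.ofReal_add (by positivity) (by positivity),
    ENNReal.toReal_ofReal (by positivity)]
  ring
end
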